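/- Suppose Σ_Γ has an irreducible core and let E ⊆ Σ_Γ be a nonempty clopen set. Let C_{α₁},…,C_{αₙ} and C_{β₁},…,C_{βₙ} be two collections of pairwise disjoint cones contained in E with t(α_i) = t(β_i) for each i, and suppose that neither of the unions ⋃_{i=1}^n C_{α_i} and ⋃_{i=1}^n C_{β_i} is equal to E. Then there exists f ∈ V_{Γ,E} that maps each C_{α_i} to C_{β_i} by the canonical similarity. -/

import Mathlib

open scoped Classical

noncomputable section

/-- A finite directed graph (loops and parallel edges are allowed). -/
structure FinDigraph : Type 1 where
  V : Type
  E : Type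
  [fintypeV : Fintype V]
  [fintypeE : Fintype E]
  o : E → V
  t : E → V

attribute [instance] FinDigraph.fintypeV FinDigraph.fintypeE

instance (Γ : FinDigraph) : TopologicalSpace Γ.E := ⊥
instance (Γ : FinDigraph) : DiscreteTopology Γ.E := ⟨rfl⟩

namespace FinDigraph

variable (Γ : FinDigraph)

/-- The subshift of finite type `Σ_Γ`: the set of all infinite directed paths in `Γ`,
viewed as a subset of the product space of all edge sequences (each edge's terminus is
the origin of the next edge). -/
def shift : Set (ℕ → Γ.E) := {x | ∀ i, Γ.t (x i) = Γ.o (x (i + 1))}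

/-- Validity of a finite directed path starting at a given node. -/
def pathOk : Γ.V → List Γ.E → Prop
  | _, [] => True
  | v, e :: l => Γ.o e = v ∧ pathOk (Γ.t e) l

/-- A finite directed path in `Γ` (a node together with a compatible list of edges;
a path with no edges is a node, regarded as a path of length `0`). -/
structure FinPath where
  start : Γ.V
  edges : List Γ.E
  ok : Γ.pathOk start edges

/-- Terminus of a list of edges starting at a given node. -/
def pathEndAux : Γ.V → List Γ.E → Γ.V
  | v, [] => v
  | _, e :: l => pathEndAux (Γ.t e) l

/-- The terminus `t(α)` of a finite directed path. -/
def pathEnd (α : Γ.FinPath) : Γ.V := Γ.pathEndAux α.start α.edges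

/-- The length-0 path at a node `v`. -/
def trivPath (v : Γ.V) : Γ.FinPath := ⟨v, [], by simp [pathOk]⟩

/-- The cone `C_α ⊆ Σ_Γ` of all infinite directed paths having `α` as a prefix. -/
def cone (α : Γ.FinPath) : Set (ℕ → Γ.E) :=
  {x | x ∈ Γ.shift ∧ Γ.o (x 0) = α.start ∧
    ∀ (i : ℕ) (h : i < α.edges.length), x i = α.edges.get ⟨i, h⟩}

/-- The canonical similarity `C_α → C_β` (for `t(α) = t(β)`) on the level of edge
sequences: delete the prefix `α` and attach the prefix `β`. -/
def splice (α β : Γ.FinPath) (x : ℕ → Γ.E) : ℕ → Γ.E := fun i =>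
  if h : i < β.edges.length then β.edges.get ⟨i, h⟩
  else x (i - β.edges.length + α.edges.length)

/-- Concatenation `α · ω` of a finite path with an infinite path (on sequences). -/
def catPath (α : Γ.FinPath) (x : ℕ → Γ.E) : ℕ → Γ.E :=
  Γ.splice (Γ.trivPath (Γ.pathEnd α)) α x

/-- The length of the path `f̄(α)`, i.e. of the greatest common prefix of all points
of `f(C_α)`. -/
def barLen (f : (ℕ → Γ.E) → ℕ → Γ.E) (α : Γ.FinPath) : ℕ :=
  sSup {n | ∀ x ∈ Γ.cone α, ∀ y ∈ Γ.cone α, ∀ i < n, f x i = f y i}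

/-- The local action `f|_α : C_{t(α)} → C_{t(f̄(α))}`, determined by
`f(α·ω) = f̄(α)·(f|_α)(ω)`.  It is recorded together with the node `t(α)`
(the node of its domain cone), and is extended by the identity off the cone
`C_{t(α)}`. -/
def localAction (f : (ℕ → Γ.E) → ℕ → Γ.E) (α : Γ.FinPath) :
    Γ.V × ((ℕ → Γ.E) → ℕ → Γ.E) :=
  (Γ.pathEnd α, fun w =>
    if w ∈ Γ.cone (Γ.trivPath (Γ.pathEnd α)) then
      fun i => f (Γ.catPath α w) (i + Γ.barLen f α)
    else w)

/-- A map is rational (on a domain `D`) if it has only finitely many distinct local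
actions at cones contained in `D`. -/
def RationalOn (f : (ℕ → Γ.E) → ℕ → Γ.E) (D : Set (ℕ → Γ.E)) : Prop :=
  (Γ.localAction f '' {α : Γ.FinPath | Γ.cone α ⊆ D}).Finite

/-- The nucleus `𝒩_f` of a map: the set of local actions `f|_α` that occur for
infinitely many finite paths `α` with `C_α` contained in the domain. -/
def nucleusOf (f : (ℕ → Γ.E) → ℕ → Γ.E) (D : Set (ℕ → Γ.E)) :
    Set (Γ.V × ((ℕ → Γ.E) → ℕ → Γ.E)) :=
  {p | {α : Γ.FinPath | Γ.cone α ⊆ D ∧ Γ.localAction f α = p}.Infinite}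

/-- A nondegenerate map on `Σ_Γ` with domain `D`: it takes values in `Σ_Γ` and maps no
cone contained in `D` to a single point. -/
def Nondegenerate (f : (ℕ → Γ.E) → ℕ → Γ.E) (D : Set (ℕ → Γ.E)) : Prop :=
  (∀ x ∈ D, f x ∈ Γ.shift) ∧
  ∀ α : Γ.FinPath, Γ.cone α ⊆ D → ¬∃ p, ∀ x ∈ Γ.cone α, f x = p

/-- Extension of a map `E → E'` between subsets of the sequence space to a globally
defined map (by the identity off `E`). -/
def homExt (E E' : Set (ℕ → Γ.E)) (f : ↥E → ↥E') : (ℕ → Γ.E) → ℕ → Γ.E :=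
  fun x => if h : x ∈ E then ↑(f ⟨x, h⟩) else x

/-- Extension of a permutation of `E` to a globally defined map. -/
def permExt (E : Set (ℕ → Γ.E)) (g : Equiv.Perm ↥E) : (ℕ → Γ.E) → ℕ → Γ.E :=
  Γ.homExt E E ⇑g

/-- `E` is a clopen subset of the subshift `Σ_Γ`. -/
def ClopenIn (E : Set (ℕ → Γ.E)) : Prop :=
  IsClopen {x : ↥Γ.shift | (x : ℕ → Γ.E) ∈ E}

/-- `U ⊆ Σ_Γ` is open in the subshift. -/
def OpenInShift (U : Set (ℕ → Γ.E)) : Prop :=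
  IsOpen {x : ↥Γ.shift | (x : ℕ → Γ.E) ∈ U}

/-- The subshift `Σ_Γ` has no isolated points. -/
def NoIsolatedPoints : Prop := ∀ x : ↥Γ.shift, ¬IsOpen ({x} : Set ↥Γ.shift)

/-- The subshift `Σ_Γ` has no empty cones. -/
def NoEmptyCones : Prop := ∀ α : Γ.FinPath, (Γ.cone α).Nonempty

/-- A permutation of `E` which is a homeomorphism and is a rational map:
an element of the rational group `R_{Γ,E}`. -/
def IsRatHomeo (E : Set (ℕ → Γ.E)) (g : Equiv.Perm ↥E) : Prop :=
  Continuous ⇑g ∧ Continuous ⇑g.symm ∧ Γ.RationalOn (Γ.permExt E g) E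

/-- `g` maps the cone `C_α` to the cone `C_β` by the canonical similarity
`α·ω ↦ β·ω`. -/
def RealizesCanonSim (E : Set (ℕ → Γ.E)) (g : Equiv.Perm ↥E) (α β : Γ.FinPath) : Prop :=
  ∀ x, ∀ hx : x ∈ E, x ∈ Γ.cone α → ↑(g ⟨x, hx⟩) = Γ.splice α β x

/-- A rational similarity group (RSG): a subgroup of the rational group `R_{Γ,E}` that
realizes the canonical similarity between any two cones `C_α, C_β ⊊ E` with
`t(α) = t(β)`. -/
def IsRSG (E : Set (ℕ → Γ.E)) (G : Subgroup (Equiv.Perm ↥E)) : Prop :=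
  (∀ g ∈ G, Γ.IsRatHomeo E g) ∧
  ∀ α β : Γ.FinPath, Γ.pathEnd α = Γ.pathEnd β → Γ.cone α ⊂ E → Γ.cone β ⊂ E →
    ∃ g ∈ G, Γ.RealizesCanonSim E g α β

/-- `h` locally agrees with the group `G`: every point has an open neighborhood on
which `h` coincides with some element of `G`. -/
def LocallyAgrees (E : Set (ℕ → Γ.E)) (G : Subgroup (Equiv.Perm ↥E))
    (h : Equiv.Perm ↥E) : Prop :=
  ∀ x : ↥E, ∃ U : Set ↥E, IsOpen U ∧ x ∈ U ∧ ∃ g ∈ G, ∀ u ∈ U, h u = g u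

/-- `G` is full as a group of homeomorphisms of `E`: every homeomorphism of `E` that
locally agrees with `G` already belongs to `G`. -/
def IsFullOn (E : Set (ℕ → Γ.E)) (G : Subgroup (Equiv.Perm ↥E)) : Prop :=
  ∀ h : Equiv.Perm ↥E, Continuous ⇑h → Continuous ⇑h.symm →
    Γ.LocallyAgrees E G h → h ∈ G

/-- The nucleus `𝒩_G` of a subgroup `G ≤ R_{Γ,E}`: the union of the nuclei of its
elements. -/
def groupNucleus (E : Set (ℕ → Γ.E)) (G : Subgroup (Equiv.Perm ↥E)) :
    Set (Γ.V × ((ℕ → Γ.E) → ℕ → Γ.E)) :=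
  ⋃ g ∈ G, Γ.nucleusOf (Γ.permExt E g) E

/-- An edge of the induced subgraph on a set `W` of nodes. -/
def InducedEdge (W : Set Γ.V) (e : Γ.E) : Prop := Γ.o e ∈ W ∧ Γ.t e ∈ W

/-- A path of the induced subgraph on `W`. -/
def PathIn (W : Set Γ.V) (α : Γ.FinPath) : Prop :=
  α.start ∈ W ∧ ∀ e ∈ α.edges, Γ.InducedEdge W e

/-- The induced subgraph on `W` is strongly connected and is not a directed cycle,
i.e. `Σ_{Γ₀}` is irreducible (where `Γ₀` is the induced subgraph on `W`). -/
def IrreducibleOn (W : Set Γ.V) : Prop :=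
  (∀ v ∈ W, ∀ w ∈ W, ∃ α : Γ.FinPath,
      α.start = v ∧ Γ.pathEnd α = w ∧ α.edges ≠ [] ∧ Γ.PathIn W α) ∧
  ¬∀ v ∈ W, ∃! e : Γ.E, Γ.InducedEdge W e ∧ Γ.o e = v

/-- `Σ_Γ` has an irreducible core: an induced subgraph `Γ₀` (on a node set `W`) with
`Σ_{Γ₀}` irreducible, such that every node has a directed path to `Γ₀` and every
sufficiently long directed path ends in `Γ₀`. -/
def HasIrreducibleCore : Prop :=
  ∃ W : Set Γ.V, Γ.IrreducibleOn W ∧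
    (∀ v : Γ.V, ∃ α : Γ.FinPath, α.start = v ∧ Γ.pathEnd α ∈ W) ∧
    ∃ N : ℕ, ∀ α : Γ.FinPath, α.edges.length = N → Γ.pathEnd α ∈ W

/-- `G ≤ R_{Γ,E}` is contracting: `Σ_Γ` has an irreducible core and the nucleus `𝒩_G`
is finite. -/
def IsContracting (E : Set (ℕ → Γ.E)) (G : Subgroup (Equiv.Perm ↥E)) : Prop :=
  Γ.HasIrreducibleCore ∧ (Γ.groupNucleus E G).Finite

/-- An element of the Thompson group `V_{Γ,E}`: there are partitions of `E` into cones
`C_{α_1},…,C_{α_k}` and `C_{β_1},…,C_{β_k}` with `t(α_i) = t(β_i)` such that `g` maps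
each `C_{α_i}` to `C_{β_i}` by the canonical similarity. -/
def IsThompson (E : Set (ℕ → Γ.E)) (g : Equiv.Perm ↥E) : Prop :=
  ∃ (k : ℕ) (α β : Fin k → Γ.FinPath),
    (∀ i, Γ.pathEnd (α i) = Γ.pathEnd (β i)) ∧
    E = (⋃ i, Γ.cone (α i)) ∧
    Pairwise (fun i j => Disjoint (Γ.cone (α i)) (Γ.cone (α j))) ∧
    E = (⋃ i, Γ.cone (β i)) ∧
    Pairwise (fun i j => Disjoint (Γ.cone (β i)) (Γ.cone (β j))) ∧
    ∀ i, Γ.RealizesCanonSim E g (α i) (β i)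

/-- A rational (eventually repeating) point `σ·τ^∞` of `Σ_Γ`. -/
def IsRationalPt (x : ℕ → Γ.E) : Prop :=
  ∃ σ τ : Γ.FinPath, τ.edges ≠ [] ∧
    (∀ (i : ℕ) (h : i < σ.edges.length), x i = σ.edges.get ⟨i, h⟩) ∧
    ∀ i : ℕ, σ.edges.length ≤ i →
      ∀ h : (i - σ.edges.length) % τ.edges.length < τ.edges.length,
        x i = τ.edges.get ⟨(i - σ.edges.length) % τ.edges.length, h⟩

/-- `β = f̄(α)`: the cone `C_β` is the smallest cone containing `f(C_α)`, with `β` the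
greatest common prefix of the points of `f(C_α)`. -/
def IsBar (f : (ℕ → Γ.E) → ℕ → Γ.E) (α β : Γ.FinPath) : Prop :=
  f '' Γ.cone α ⊆ Γ.cone β ∧
  ∀ γ : Γ.FinPath, f '' Γ.cone α ⊆ Γ.cone γ →
    Γ.cone β ⊆ Γ.cone γ ∧ γ.edges.length ≤ β.edges.length

set_option linter.dupNamespace false
variable {Γ : FinDigraph}

theorem FinPath.ext' {α β : Γ.FinPath} (h1 : α.start = β.start)
    (h2 : α.edges = β.edges) : α = β := by
  cases α; cases β; simp_all

theorem pathEndAux_append (v : Γ.V) (l₁ l₂ : List Γ.E) :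
    Γ.pathEndAux v (l₁ ++ l₂) = Γ.pathEndAux (Γ.pathEndAux v l₁) l₂ := by
  induction l₁ generalizing v with
  | nil => rfl
  | cons e l ih => simp [pathEndAux, ih]

theorem pathOk_append {v : Γ.V} {l₁ l₂ : List Γ.E} :
    Γ.pathOk v (l₁ ++ l₂) ↔ Γ.pathOk v l₁ ∧ Γ.pathOk (Γ.pathEndAux v l₁) l₂ := by
  induction l₁ generalizing v with
  | nil => simp [pathOk, pathEndAux]
  | cons e l ih => simp [pathOk, pathEndAux, ih, and_assoc]

theorem pathOk_get {v : Γ.V} {l : List Γ.E} (hok : Γ.pathOk v l) :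
    ∀ i (h : i < l.length), Γ.o (l.get ⟨i, h⟩) = Γ.pathEndAux v (l.take i) := by
  induction l generalizing v with
  | nil => intro i h; simp at h
  | cons e l ih =>
    intro i h
    match i with
    | 0 => simpa [pathEndAux] using hok.1
    | (j+1) =>
      simpa [pathEndAux] using ih hok.2 j (by simpa using h)

theorem pathEndAux_take_succ {v : Γ.V} {l : List Γ.E} {i : ℕ} (h : i < l.length) :
    Γ.pathEndAux v (l.take (i+1)) = Γ.t (l.get ⟨i, h⟩) := by
  have : l.take (i+1) = l.take i ++ [l.get ⟨i, h⟩] := by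
    rw [List.take_succ]
    simp [List.getElem?_eq_getElem h]
  rw [this, pathEndAux_append]
  rfl

/-- Extension of a path by one edge. -/
def FinPath.ext1 (γ : Γ.FinPath) (e : Γ.E) (h : Γ.o e = Γ.pathEnd γ) : Γ.FinPath :=
  ⟨γ.start, γ.edges ++ [e], by
    rw [pathOk_append]
    exact ⟨γ.ok, h, trivial⟩⟩

@[simp] theorem FinPath.ext1_edges (γ : Γ.FinPath) (e : Γ.E) (h) :
    (γ.ext1 e h).edges = γ.edges ++ [e] := rfl

@[simp] theorem FinPath.ext1_start (γ : Γ.FinPath) (e : Γ.E) (h) :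
    (γ.ext1 e h).start = γ.start := rfl

@[simp] theorem pathEnd_ext1 (γ : Γ.FinPath) (e : Γ.E) (h) :
    Γ.pathEnd (γ.ext1 e h) = Γ.t e := by
  show Γ.pathEndAux _ (γ.edges ++ [e]) = _
  rw [pathEndAux_append]; rfl

@[simp] theorem pathEnd_trivPath (v : Γ.V) : Γ.pathEnd (Γ.trivPath v) = v := rfl

@[simp] theorem trivPath_edges (v : Γ.V) : (Γ.trivPath v).edges = [] := rfl

@[simp] theorem trivPath_start (v : Γ.V) : (Γ.trivPath v).start = v := rfl

theorem o_of_mem_cone {α : Γ.FinPath} {x : ℕ → Γ.E} (hx : x ∈ Γ.cone α) :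
    ∀ j ≤ α.edges.length, Γ.o (x j) = Γ.pathEndAux α.start (α.edges.take j) := by
  intro j hj
  induction j with
  | zero => simpa [pathEndAux] using hx.2.1
  | succ i ih =>
    have hi : i < α.edges.length := hj
    have h1 : Γ.o (x (i+1)) = Γ.t (x i) := (hx.1 i).symm
    rw [h1, hx.2.2 i hi, pathEndAux_take_succ hi]

theorem o_len_of_mem_cone {α : Γ.FinPath} {x : ℕ → Γ.E} (hx : x ∈ Γ.cone α) :
    Γ.o (x α.edges.length) = Γ.pathEnd α := by
  simpa [pathEnd] using o_of_mem_cone hx α.edges.length le_rfl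

theorem splice_lt {α β : Γ.FinPath} {x : ℕ → Γ.E} {i : ℕ} (h : i < β.edges.length) :
    Γ.splice α β x i = β.edges.get ⟨i, h⟩ := dif_pos h

theorem splice_ge {α β : Γ.FinPath} {x : ℕ → Γ.E} {i : ℕ} (h : β.edges.length ≤ i) :
    Γ.splice α β x i = x (i - β.edges.length + α.edges.length) := dif_neg (by omega)

theorem splice_mem_cone {α β : Γ.FinPath} (hend : Γ.pathEnd α = Γ.pathEnd β)
    {x : ℕ → Γ.E} (hx : x ∈ Γ.cone α) : Γ.splice α β x ∈ Γ.cone β := by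
  set a := α.edges.length
  set b := β.edges.length with hb
  have hoa : Γ.o (x a) = Γ.pathEnd β := by rw [o_len_of_mem_cone hx, hend]
  have hshift : Γ.splice α β x ∈ Γ.shift := by
    intro i
    rcases lt_trichotomy (i+1) b with h | h | h
    · rw [splice_lt (show i < b by omega), splice_lt h,
        pathOk_get β.ok (i+1) h, ← pathEndAux_take_succ (show i < b by omega)]
    · have hib : i < b := by omega
      rw [splice_lt hib, splice_ge (by omega)]
      have : i + 1 - b + a = a := by omega
      rw [this, hoa]
      rw [show Γ.pathEnd β = Γ.pathEndAux β.start (β.edges.take (i+1)) by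
        rw [pathEnd, show i+1 = β.edges.length by omega, List.take_length]]
      rw [pathEndAux_take_succ hib]
    · rw [splice_ge (by omega), splice_ge (by omega),
        show i + 1 - b + a = (i - b + a) + 1 by omega]
      exact hx.1 _
  refine ⟨hshift, ?_, fun i h => splice_lt h⟩
  rcases Nat.eq_zero_or_pos b with h0 | h0
  · rw [splice_ge (by omega), show 0 - b + a = a by omega, hoa, pathEnd]
    have : β.edges = [] := List.length_eq_zero_iff.mp (by omega)
    rw [this]
    rfl
  · rw [splice_lt h0, pathOk_get β.ok 0 h0]
    rfl

theorem splice_splice {α β : Γ.FinPath} {x : ℕ → Γ.E} (hx : x ∈ Γ.cone α) :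
    Γ.splice β α (Γ.splice α β x) = x := by
  set a := α.edges.length
  set b := β.edges.length
  funext i
  rcases lt_or_ge i a with h | h
  · rw [splice_lt h]
    exact (hx.2.2 i h).symm
  · rw [splice_ge h, splice_ge (show b ≤ i - a + b by omega),
      show i - a + b - b + a = i by omega]

theorem eq_of_mem_cone_same_len {γ δ : Γ.FinPath} (hlen : γ.edges.length = δ.edges.length)
    {x : ℕ → Γ.E} (hγ : x ∈ Γ.cone γ) (hδ : x ∈ Γ.cone δ) : γ = δ := by
  refine FinPath.ext' ?_ ?_
  · rw [← hγ.2.1, ← hδ.2.1]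
  · refine List.ext_get hlen ?_
    intro i h1 h2
    rw [← hγ.2.2 i h1, ← hδ.2.2 i h2]

theorem mem_cone_ext1_iff {γ : Γ.FinPath} {e : Γ.E} {h} {x : ℕ → Γ.E} :
    x ∈ Γ.cone (γ.ext1 e h) ↔ x ∈ Γ.cone γ ∧ x γ.edges.length = e := by
  constructor
  · intro hx
    have hlen : γ.edges.length < (γ.ext1 e h).edges.length := by simp
    refine ⟨⟨hx.1, hx.2.1, fun i hi => ?_⟩, ?_⟩
    · rw [hx.2.2 i (by simp; omega)]
      simp [List.get_eq_getElem, FinPath.ext1]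
      rw [List.getElem_append_left hi]
    · rw [hx.2.2 _ hlen]
      simp [List.get_eq_getElem, FinPath.ext1]
  · rintro ⟨hx, he⟩
    refine ⟨hx.1, hx.2.1, fun i hi => ?_⟩
    simp only [FinPath.ext1_edges, List.length_append, List.length_singleton] at hi
    rcases lt_or_ge i γ.edges.length with h1 | h1
    · rw [hx.2.2 i h1]
      simp [List.get_eq_getElem, FinPath.ext1]
      rw [List.getElem_append_left h1]
    · have : i = γ.edges.length := by omega
      subst this
      simp [List.get_eq_getElem, FinPath.ext1, he]

theorem cone_ext1_subset {γ : Γ.FinPath} {e : Γ.E} {h} :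
    Γ.cone (γ.ext1 e h) ⊆ Γ.cone γ := fun _ hx => (mem_cone_ext1_iff.mp hx).1

theorem cone_eq_union_ext1 {γ : Γ.FinPath} :
    Γ.cone γ = ⋃ (e : Γ.E) (h : Γ.o e = Γ.pathEnd γ), Γ.cone (γ.ext1 e h) := by
  ext x
  simp only [Set.mem_iUnion]
  constructor
  · intro hx
    exact ⟨x γ.edges.length, o_len_of_mem_cone hx, mem_cone_ext1_iff.mpr ⟨hx, rfl⟩⟩
  · rintro ⟨e, he, hx⟩
    exact cone_ext1_subset hx
/-! ### Graph facts -/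

theorem exists_out_edge {W : Set Γ.V} (hirr : Γ.IrreducibleOn W)
    (hreach : ∀ v : Γ.V, ∃ α : Γ.FinPath, α.start = v ∧ Γ.pathEnd α ∈ W) :
    ∀ v : Γ.V, ∃ e : Γ.E, Γ.o e = v := by
  intro v
  obtain ⟨γ, hst, hed⟩ := hreach v
  match hγ : γ.edges with
  | e :: l =>
    have := γ.ok
    rw [hγ] at this
    exact ⟨e, this.1 ▸ hst ▸ rfl⟩
  | [] =>
    have hv : v ∈ W := by
      have : Γ.pathEnd γ = v := by rw [pathEnd, hγ, hst]; rfl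
      rwa [this] at hed
    obtain ⟨δ, hδs, _, hδne, _⟩ := hirr.1 v hv v hv
    match hδ : δ.edges with
    | [] => exact absurd hδ hδne
    | e :: l =>
      have := δ.ok
      rw [hδ] at this
      exact ⟨e, this.1 ▸ hδs ▸ rfl⟩

theorem exists_branch {W : Set Γ.V} (hirr : Γ.IrreducibleOn W) :
    ∃ v : Γ.V, v ∈ W ∧ ∃ e₁ e₂ : Γ.E, e₁ ≠ e₂ ∧ Γ.InducedEdge W e₁ ∧
      Γ.InducedEdge W e₂ ∧ Γ.o e₁ = v ∧ Γ.o e₂ = v := by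
  have h2 := hirr.2
  push_neg at h2
  obtain ⟨v, hv, hnu⟩ := h2
  obtain ⟨δ, hδs, _, hδne, hδin⟩ := hirr.1 v hv v hv
  obtain ⟨e, hein, heo⟩ : ∃ e : Γ.E, Γ.InducedEdge W e ∧ Γ.o e = v := by
    match hδ : δ.edges with
    | [] => exact absurd hδ hδne
    | e :: l =>
      have hok := δ.ok
      rw [hδ] at hok
      exact ⟨e, hδin.2 e (by rw [hδ]; exact List.mem_cons_self),
        hok.1 ▸ hδs ▸ rfl⟩
  rw [ExistsUnique] at hnu
  push_neg at hnu
  obtain ⟨e', he', hne⟩ := hnu e ⟨hein, heo⟩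
  exact ⟨v, hv, e', e, hne, he'.1, hein, he'.2, heo⟩

/-- Choice of an outgoing edge at every node. -/
noncomputable def nextEdge (Γ : FinDigraph) (hout : ∀ v : Γ.V, ∃ e : Γ.E, Γ.o e = v)
    (v : Γ.V) : Γ.E := (hout v).choose

theorem nextEdge_spec (Γ : FinDigraph) (hout) (v : Γ.V) :
    Γ.o (Γ.nextEdge hout v) = v := (hout v).choose_spec

/-- An infinite path from a node. -/
noncomputable def tailSeq (Γ : FinDigraph) (hout : ∀ v : Γ.V, ∃ e : Γ.E, Γ.o e = v)
    (v : Γ.V) : ℕ → Γ.E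
  | 0 => Γ.nextEdge hout v
  | (n+1) => Γ.nextEdge hout (Γ.t (Γ.tailSeq hout v n))

theorem tailSeq_shift (Γ : FinDigraph) (hout) (v : Γ.V) :
    Γ.tailSeq hout v ∈ Γ.shift := by
  intro i
  rw [show Γ.tailSeq hout v (i+1) = Γ.nextEdge hout (Γ.t (Γ.tailSeq hout v i)) from rfl,
    nextEdge_spec]

theorem tailSeq_mem_cone_triv (Γ : FinDigraph) (hout) (v : Γ.V) :
    Γ.tailSeq hout v ∈ Γ.cone (Γ.trivPath v) := by
  refine ⟨tailSeq_shift Γ hout v, ?_, ?_⟩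
  · rw [show Γ.tailSeq hout v 0 = Γ.nextEdge hout v from rfl, nextEdge_spec]; rfl
  · intro i h; simp at h

theorem cone_nonempty (hout : ∀ v : Γ.V, ∃ e : Γ.E, Γ.o e = v) (γ : Γ.FinPath) :
    (Γ.cone γ).Nonempty := by
  refine ⟨Γ.splice (Γ.trivPath (Γ.pathEnd γ)) γ (Γ.tailSeq hout (Γ.pathEnd γ)), ?_⟩
  exact splice_mem_cone (by simp) (tailSeq_mem_cone_triv Γ hout (Γ.pathEnd γ))
/-! ### Multiset rewriting -/

/-- The multiset of termini of edges leaving `u`. -/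
def ch (Γ : FinDigraph) (u : Γ.V) : Multiset Γ.V :=
  (Finset.univ.filter (fun e => Γ.o e = u)).val.map Γ.t

/-- One expansion step on multisets of nodes. -/
def mstep (Γ : FinDigraph) (s t : Multiset Γ.V) : Prop :=
  ∃ u s', s = u ::ₘ s' ∧ t = s' + Γ.ch u

/-- Reflexive-transitive closure of expansion. -/
def mRT (Γ : FinDigraph) : Multiset Γ.V → Multiset Γ.V → Prop :=
  Relation.ReflTransGen Γ.mstep

/-- Full one-step expansion. -/
def mF (Γ : FinDigraph) (s : Multiset Γ.V) : Multiset Γ.V := s.bind Γ.ch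

theorem mem_ch_iff {u w : Γ.V} : w ∈ Γ.ch u ↔ ∃ e : Γ.E, Γ.o e = u ∧ Γ.t e = w := by
  unfold ch
  rw [Multiset.mem_map]
  constructor
  · rintro ⟨e, he, rfl⟩
    rw [Finset.mem_val, Finset.mem_filter] at he
    exact ⟨e, he.2, rfl⟩
  · rintro ⟨e, he, rfl⟩
    exact ⟨e, by rw [Finset.mem_val, Finset.mem_filter]; exact ⟨Finset.mem_univ _, he⟩, rfl⟩

@[simp] theorem mF_zero : Γ.mF 0 = 0 := rfl

theorem mF_cons (a : Γ.V) (s : Multiset Γ.V) : Γ.mF (a ::ₘ s) = Γ.ch a + Γ.mF s :=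
  Multiset.cons_bind _ _ _

theorem mF_add (s t : Multiset Γ.V) : Γ.mF (s + t) = Γ.mF s + Γ.mF t :=
  Multiset.add_bind _ _ _

theorem mstep_add {s t : Multiset Γ.V} (h : Γ.mstep s t) (r : Multiset Γ.V) :
    Γ.mstep (s + r) (t + r) := by
  obtain ⟨u, s', rfl, rfl⟩ := h
  exact ⟨u, s' + r, by rw [Multiset.cons_add], by rw [add_right_comm]⟩

theorem mRT_add {s t : Multiset Γ.V} (h : Γ.mRT s t) (r : Multiset Γ.V) :
    Γ.mRT (s + r) (t + r) := by
  induction h with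
  | refl => exact Relation.ReflTransGen.refl
  | tail _ hst ih => exact ih.tail (mstep_add hst r)

theorem mRT_trans {s t u : Multiset Γ.V} (h1 : Γ.mRT s t) (h2 : Γ.mRT t u) :
    Γ.mRT s u := Relation.ReflTransGen.trans h1 h2

theorem mRT_mF (s : Multiset Γ.V) : Γ.mRT s (Γ.mF s) := by
  induction s using Multiset.induction with
  | empty => exact Relation.ReflTransGen.refl
  | cons a s ih =>
    have h1 : Γ.mstep (a ::ₘ s) (s + Γ.ch a) := ⟨a, s, rfl, rfl⟩
    have h2 : Γ.mRT (s + Γ.ch a) (Γ.mF s + Γ.ch a) := mRT_add ih _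
    have : Γ.mF (a ::ₘ s) = Γ.mF s + Γ.ch a := by rw [mF_cons, add_comm]
    rw [this]
    exact (Relation.ReflTransGen.single h1).trans h2

theorem mRT_of_mstep_mF {s t : Multiset Γ.V} (h : Γ.mstep s t) : Γ.mRT t (Γ.mF s) := by
  obtain ⟨u, s', rfl, rfl⟩ := h
  have : Γ.mF (u ::ₘ s') = Γ.mF s' + Γ.ch u := by rw [mF_cons, add_comm]
  rw [this]
  exact mRT_add (mRT_mF s') _

theorem mF_mono_mstep {s t : Multiset Γ.V} (h : Γ.mstep s t) : Γ.mRT (Γ.mF s) (Γ.mF t) := by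
  obtain ⟨u, s', rfl, rfl⟩ := h
  rw [mF_cons, mF_add]
  have h2 := mRT_add (mRT_mF (Γ.ch u)) (Γ.mF s')
  rw [add_comm (Γ.mF s') (Γ.mF (Γ.ch u))]
  exact h2

theorem mF_mono {s t : Multiset Γ.V} (h : Γ.mRT s t) : Γ.mRT (Γ.mF s) (Γ.mF t) := by
  induction h with
  | refl => exact Relation.ReflTransGen.refl
  | tail _ hst ih => exact ih.trans (mF_mono_mstep hst)

theorem mFn_mono {s t : Multiset Γ.V} (h : Γ.mRT s t) (n : ℕ) :
    Γ.mRT (Γ.mF^[n] s) (Γ.mF^[n] t) := by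
  induction n generalizing s t with
  | zero => exact h
  | succ n ih =>
    rw [Function.iterate_succ_apply', Function.iterate_succ_apply']
    exact mF_mono (ih h)

theorem mRT_mFn (s : Multiset Γ.V) (n : ℕ) : Γ.mRT s (Γ.mF^[n] s) := by
  induction n with
  | zero => exact Relation.ReflTransGen.refl
  | succ n ih =>
    rw [Function.iterate_succ_apply']
    exact ih.trans (mRT_mF _)

theorem mRT_mFn_le (s : Multiset Γ.V) {m n : ℕ} (h : m ≤ n) :
    Γ.mRT (Γ.mF^[m] s) (Γ.mF^[n] s) := by
  obtain ⟨d, rfl⟩ := Nat.exists_eq_add_of_le h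
  rw [add_comm, Function.iterate_add_apply]
  exact mRT_mFn _ _

theorem mRT_to_mFn {s t : Multiset Γ.V} (h : Γ.mRT s t) : ∃ n, Γ.mRT t (Γ.mF^[n] s) := by
  induction h with
  | refl => exact ⟨0, Relation.ReflTransGen.refl⟩
  | tail hst hstep ih =>
    obtain ⟨n, hn⟩ := ih
    exact ⟨n + 1, (mRT_of_mstep_mF hstep).trans (by
      rw [Function.iterate_succ_apply']
      exact mF_mono hn)⟩

/-- Joinability. -/
def mJoin (Γ : FinDigraph) (s t : Multiset Γ.V) : Prop := ∃ z, Γ.mRT s z ∧ Γ.mRT t z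

theorem mJoin_refl (s : Multiset Γ.V) : Γ.mJoin s s :=
  ⟨s, Relation.ReflTransGen.refl, Relation.ReflTransGen.refl⟩

theorem mJoin_symm {s t : Multiset Γ.V} (h : Γ.mJoin s t) : Γ.mJoin t s := by
  obtain ⟨z, h1, h2⟩ := h; exact ⟨z, h2, h1⟩

theorem mJoin_of_mRT {s t : Multiset Γ.V} (h : Γ.mRT s t) : Γ.mJoin s t :=
  ⟨t, h, Relation.ReflTransGen.refl⟩

theorem mJoin_trans {s t u : Multiset Γ.V} (h1 : Γ.mJoin s t) (h2 : Γ.mJoin t u) :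
    Γ.mJoin s u := by
  obtain ⟨z₁, hs, ht₁⟩ := h1
  obtain ⟨z₂, ht₂, hu⟩ := h2
  obtain ⟨n₁, hn₁⟩ := mRT_to_mFn ht₁
  obtain ⟨n₂, hn₂⟩ := mRT_to_mFn ht₂
  rcases le_total n₁ n₂ with h | h
  · exact ⟨Γ.mF^[n₂] t, hs.trans (hn₁.trans (mRT_mFn_le t h)), hu.trans hn₂⟩
  · exact ⟨Γ.mF^[n₁] t, hs.trans hn₁, hu.trans (hn₂.trans (mRT_mFn_le t h))⟩

theorem mJoin_add {s t : Multiset Γ.V} (h : Γ.mJoin s t) (r : Multiset Γ.V) :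
    Γ.mJoin (s + r) (t + r) := by
  obtain ⟨z, h1, h2⟩ := h
  exact ⟨z + r, mRT_add h1 r, mRT_add h2 r⟩

theorem mJoin_mF {s t : Multiset Γ.V} (h : Γ.mJoin s t) : Γ.mJoin (Γ.mF s) (Γ.mF t) := by
  obtain ⟨z, h1, h2⟩ := h
  exact ⟨Γ.mF z, mF_mono h1, mF_mono h2⟩
/-! ### Pumping and cancellation -/

theorem ch_ne_zero (hout : ∀ v : Γ.V, ∃ e : Γ.E, Γ.o e = v) (u : Γ.V) :
    Γ.ch u ≠ 0 := by
  obtain ⟨e, he⟩ := hout u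
  intro h0
  have : Γ.t e ∈ Γ.ch u := mem_ch_iff.mpr ⟨e, he, rfl⟩
  rw [h0] at this
  simp at this

theorem mF_ne_zero (hout : ∀ v : Γ.V, ∃ e : Γ.E, Γ.o e = v) {s : Multiset Γ.V}
    (hs : s ≠ 0) : Γ.mF s ≠ 0 := by
  obtain ⟨a, ha⟩ := Multiset.exists_mem_of_ne_zero hs
  obtain ⟨w, hw⟩ := Multiset.exists_mem_of_ne_zero (ch_ne_zero hout a)
  intro h0
  have : w ∈ Γ.mF s := Multiset.mem_bind.mpr ⟨a, ha, hw⟩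
  rw [h0] at this
  simp at this

theorem mFn_ne_zero (hout : ∀ v : Γ.V, ∃ e : Γ.E, Γ.o e = v) {s : Multiset Γ.V}
    (hs : s ≠ 0) (n : ℕ) : Γ.mF^[n] s ≠ 0 := by
  induction n with
  | zero => exact hs
  | succ n ih => rw [Function.iterate_succ_apply']; exact mF_ne_zero hout ih

theorem mFn_add (s t : Multiset Γ.V) (n : ℕ) :
    Γ.mF^[n] (s + t) = Γ.mF^[n] s + Γ.mF^[n] t := by
  induction n with
  | zero => rfl
  | succ n ih => rw [Function.iterate_succ_apply', Function.iterate_succ_apply',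
      Function.iterate_succ_apply', ih, mF_add]

theorem mJoin_mFn {s t : Multiset Γ.V} (h : Γ.mJoin s t) (n : ℕ) :
    Γ.mJoin (Γ.mF^[n] s) (Γ.mF^[n] t) := by
  induction n with
  | zero => exact h
  | succ n ih => rw [Function.iterate_succ_apply', Function.iterate_succ_apply']
                 exact mJoin_mF ih

theorem mem_mFn_path {s : Multiset Γ.V} {w : Γ.V} {n : ℕ} (hw : w ∈ Γ.mF^[n] s) :
    ∃ u ∈ s, ∃ γ : Γ.FinPath, γ.start = u ∧ γ.edges.length = n ∧ Γ.pathEnd γ = w := by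
  induction n generalizing w with
  | zero => exact ⟨w, hw, Γ.trivPath w, rfl, rfl, rfl⟩
  | succ n ih =>
    rw [Function.iterate_succ_apply'] at hw
    obtain ⟨u', hu', hwu⟩ := Multiset.mem_bind.mp hw
    obtain ⟨e, heo, het⟩ := mem_ch_iff.mp hwu
    obtain ⟨u, hu, γ, hγs, hγl, hγe⟩ := ih hu'
    refine ⟨u, hu, γ.ext1 e (by rw [hγe, heo]), hγs, by simp [hγl], by simp [het]⟩

theorem mFn_subset_W {W : Set Γ.V} {N : ℕ}
    (hN : ∀ α : Γ.FinPath, α.edges.length = N → Γ.pathEnd α ∈ W)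
    (s : Multiset Γ.V) : ∀ w ∈ Γ.mF^[N] s, w ∈ W := by
  intro w hw
  obtain ⟨u, _, γ, _, hγl, hγe⟩ := mem_mFn_path hw
  rw [← hγe]
  exact hN γ hγl

theorem rt_path : ∀ (l : List Γ.E) (v : Γ.V), Γ.pathOk v l →
    ∃ r, Γ.mRT {v} ({Γ.pathEndAux v l} + r) := by
  intro l
  induction l with
  | nil =>
    intro v _
    refine ⟨0, by simp only [pathEndAux, add_zero]; exact Relation.ReflTransGen.refl⟩
  | cons e l ih =>
    intro v hok
    obtain ⟨r₁, hr₁⟩ := ih (Γ.t e) hok.2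
    obtain ⟨r₀, hr₀⟩ := Multiset.exists_cons_of_mem (mem_ch_iff.mpr ⟨e, hok.1, rfl⟩)
    have h1 : Γ.mRT {v} (Γ.ch v) := by
      have : Γ.mstep {v} (0 + Γ.ch v) := ⟨v, 0, (Multiset.cons_zero v).symm, rfl⟩
      rw [zero_add] at this
      exact Relation.ReflTransGen.single this
    refine ⟨r₁ + r₀, ?_⟩
    show Γ.mRT {v} ({Γ.pathEndAux (Γ.t e) l} + (r₁ + r₀))
    have h2 : Γ.mRT (Γ.ch v) ({Γ.pathEndAux (Γ.t e) l} + (r₁ + r₀)) := by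
      rw [hr₀, ← Multiset.singleton_add]
      have := mRT_add hr₁ r₀
      rwa [add_assoc] at this
    exact h1.trans h2

theorem rt_W_path {W : Set Γ.V} (hirr : Γ.IrreducibleOn W) {u w : Γ.V}
    (hu : u ∈ W) (hw : w ∈ W) : ∃ r, Γ.mRT {u} ({w} + r) := by
  obtain ⟨γ, hγs, hγe, _, _⟩ := hirr.1 u hu w hw
  have hok : Γ.pathOk u γ.edges := hγs ▸ γ.ok
  obtain ⟨r, hr⟩ := rt_path γ.edges u hok
  refine ⟨r, ?_⟩
  rwa [show Γ.pathEndAux u γ.edges = w by rw [← hγe, pathEnd, hγs]] at hr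

theorem rt_dup {W : Set Γ.V} (hirr : Γ.IrreducibleOn W) {v' : Γ.V} {e₁ e₂ : Γ.E}
    (hne : e₁ ≠ e₂) (h₁ : Γ.InducedEdge W e₁) (h₂ : Γ.InducedEdge W e₂)
    (ho₁ : Γ.o e₁ = v') (ho₂ : Γ.o e₂ = v') (hv' : v' ∈ W) :
    ∃ r, Γ.mRT {v'} ({v'} + {v'} + r) := by
  have he₁ : e₁ ∈ Finset.univ.filter (fun e => Γ.o e = v') := by
    simp [Finset.mem_filter, ho₁]
  have he₂ : e₂ ∈ (Finset.univ.filter (fun e => Γ.o e = v')).erase e₁ :=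
    Finset.mem_erase.mpr ⟨hne.symm, by simp [Finset.mem_filter, ho₂]⟩
  obtain ⟨m, hm⟩ := Multiset.exists_cons_of_mem (Finset.mem_val.mpr he₂)
  have hval : (Finset.univ.filter (fun e => Γ.o e = v')).val
      = e₁ ::ₘ e₂ ::ₘ m := by
    have h' := hm
    rw [Finset.erase_val] at h'
    rw [← Multiset.cons_erase (Finset.mem_val.mpr he₁), h']
  have hch : Γ.ch v' = Γ.t e₁ ::ₘ Γ.t e₂ ::ₘ m.map Γ.t := by
    rw [ch, hval]; simp
  have h1 : Γ.mRT {v'} (Γ.ch v') := by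
    have : Γ.mstep {v'} (0 + Γ.ch v') := ⟨v', 0, (Multiset.cons_zero v').symm, rfl⟩
    rw [zero_add] at this
    exact Relation.ReflTransGen.single this
  obtain ⟨r₁, hr₁⟩ := rt_W_path hirr h₁.2 hv'
  obtain ⟨r₂, hr₂⟩ := rt_W_path hirr h₂.2 hv'
  -- ch v' = {t e₁} + ({t e₂} + map)
  have hch2 : Γ.ch v' = {Γ.t e₁} + ({Γ.t e₂} + m.map Γ.t) := by
    rw [hch, Multiset.singleton_add, Multiset.singleton_add]
  have h2 : Γ.mRT (Γ.ch v') (({v'} + r₁) + ({Γ.t e₂} + m.map Γ.t)) := by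
    rw [hch2]; exact mRT_add hr₁ _
  have h3 : Γ.mRT (({v'} + r₁) + ({Γ.t e₂} + m.map Γ.t))
      (({v'} + r₂) + (({v'} + r₁) + m.map Γ.t)) := by
    have := mRT_add hr₂ (({v'} + r₁) + m.map Γ.t)
    have e1 : ({v'} + r₁) + ({Γ.t e₂} + m.map Γ.t)
        = {Γ.t e₂} + (({v'} + r₁) + m.map Γ.t) := by abel
    rw [e1]
    exact this
  refine ⟨r₂ + r₁ + m.map Γ.t, ?_⟩
  have efin : ({v'} + r₂) + (({v'} + r₁) + m.map Γ.t)
      = {v'} + {v'} + (r₂ + r₁ + m.map Γ.t) := by abel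
  rw [← efin]
  exact (h1.trans h2).trans h3
theorem pump_one {W : Set Γ.V} (hirr : Γ.IrreducibleOn W) {v' : Γ.V} (hv' : v' ∈ W)
    (hdup : ∃ r, Γ.mRT {v'} ({v'} + {v'} + r)) :
    ∀ (R : Multiset Γ.V), (∀ w ∈ R, w ∈ W) → ∀ u ∈ W, ∃ j, Γ.mRT {u} (R + j) := by
  intro R
  induction R using Multiset.induction with
  | empty =>
    intro _ u _
    exact ⟨{u}, by rw [zero_add]; exact Relation.ReflTransGen.refl⟩
  | cons w R' ih =>
    intro hsupp u hu
    have hw : w ∈ W := hsupp w (Multiset.mem_cons_self _ _)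
    obtain ⟨a, ha⟩ := rt_W_path hirr hu hv'
    obtain ⟨b, hb⟩ := hdup
    obtain ⟨c, hc⟩ := rt_W_path hirr hv' hw
    obtain ⟨j', hj'⟩ := ih (fun x hx => hsupp x (Multiset.mem_cons_of_mem hx)) v' hv'
    refine ⟨c + j' + b + a, ?_⟩
    have step1 : Γ.mRT {u} ({v'} + a) := ha
    have step2 : Γ.mRT ({v'} + a) ({v'} + {v'} + b + a) := mRT_add hb a
    have step3 : Γ.mRT ({v'} + {v'} + b + a) ({w} + c + ({v'} + b + a)) := by
      have := mRT_add hc ({v'} + b + a)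
      have e1 : {v'} + {v'} + b + a = {v'} + ({v'} + b + a) := by abel
      have e2 : {w} + c + ({v'} + b + a) = ({w} + c) + ({v'} + b + a) := by abel
      rw [e1, e2]
      exact this
    have step4 : Γ.mRT ({w} + c + ({v'} + b + a)) (R' + j' + ({w} + c + b + a)) := by
      have := mRT_add hj' ({w} + c + b + a)
      have e1 : {w} + c + ({v'} + b + a) = {v'} + ({w} + c + b + a) := by abel
      rw [e1]
      exact this
    have efin : R' + j' + ({w} + c + b + a) = (w ::ₘ R') + (c + j' + b + a) := by
      rw [← Multiset.singleton_add]
      abel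
    rw [← efin]
    exact ((step1.trans step2).trans step3).trans step4

theorem pump {W : Set Γ.V} (hirr : Γ.IrreducibleOn W)
    (hout : ∀ v : Γ.V, ∃ e : Γ.E, Γ.o e = v) {N : ℕ}
    (hN : ∀ α : Γ.FinPath, α.edges.length = N → Γ.pathEnd α ∈ W)
    {s : Multiset Γ.V} (hs : s ≠ 0) (R : Multiset Γ.V) (hR : ∀ w ∈ R, w ∈ W) :
    ∃ j, Γ.mRT s (R + j) := by
  obtain ⟨v', hv', e₁, e₂, hne, h₁, h₂, ho₁, ho₂⟩ := exists_branch hirr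
  have hdup := rt_dup hirr hne h₁ h₂ ho₁ ho₂ hv'
  set z := Γ.mF^[N] s with hz
  have hzne : z ≠ 0 := mFn_ne_zero hout hs N
  obtain ⟨u, hu⟩ := Multiset.exists_mem_of_ne_zero hzne
  have huW : u ∈ W := mFn_subset_W hN s u hu
  obtain ⟨z₀, hz₀⟩ := Multiset.exists_cons_of_mem hu
  obtain ⟨j, hj⟩ := pump_one hirr hv' hdup R hR u huW
  refine ⟨j + z₀, ?_⟩
  have h1 : Γ.mRT s z := mRT_mFn s N
  have h2 : Γ.mRT z (R + j + z₀) := by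
    rw [hz₀, ← Multiset.singleton_add]
    exact mRT_add hj z₀
  have e1 : R + j + z₀ = R + (j + z₀) := by abel
  rw [← e1]
  exact h1.trans h2

theorem mcancel {W : Set Γ.V} (hirr : Γ.IrreducibleOn W)
    (hout : ∀ v : Γ.V, ∃ e : Γ.E, Γ.o e = v) {N : ℕ}
    (hN : ∀ α : Γ.FinPath, α.edges.length = N → Γ.pathEnd α ∈ W)
    {s s' t : Multiset Γ.V} (hs : s ≠ 0) (hs' : s' ≠ 0)
    (hJ : Γ.mJoin (s + t) (s' + t)) : Γ.mJoin s s' := by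
  set a := Γ.mF^[N] s with hadef
  set a' := Γ.mF^[N] s' with ha'def
  set b := Γ.mF^[N] t with hbdef
  have haW : ∀ w ∈ a, w ∈ W := mFn_subset_W hN s
  have ha'W : ∀ w ∈ a', w ∈ W := mFn_subset_W hN s'
  have hbW : ∀ w ∈ b, w ∈ W := mFn_subset_W hN t
  have hane : a ≠ 0 := mFn_ne_zero hout hs N
  have ha'ne : a' ≠ 0 := mFn_ne_zero hout hs' N
  have hJ2 : Γ.mJoin (a + b) (a' + b) := by
    have := mJoin_mFn hJ N
    rwa [mFn_add, mFn_add] at this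
  -- pump a to contain a' + b
  obtain ⟨J, hJa⟩ := pump hirr hout hN hane (a' + b)
    (fun w hw => by rcases Multiset.mem_add.mp hw with h | h
                    exacts [ha'W w h, hbW w h])
  have h1 : Γ.mJoin a (a' + (b + J)) := by
    have e1 : a' + b + J = a' + (b + J) := by abel
    exact mJoin_of_mRT (e1 ▸ hJa)
  set A := b + J with hA
  -- h2 : A + (a + b) joins (a + b)
  have h2 : Γ.mJoin (A + (a + b)) (a + b) := by
    have s1 : Γ.mJoin (A + (a + b)) (A + (a' + b)) := by
      have := mJoin_add hJ2 A
      have e1 : a + b + A = A + (a + b) := by abel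
      have e2 : a' + b + A = A + (a' + b) := by abel
      rwa [e1, e2] at this
    have s2 : Γ.mJoin (A + (a' + b)) (a + b) := by
      have := mJoin_add (mJoin_symm h1) b
      have e1 : a' + A + b = A + (a' + b) := by abel
      rwa [e1] at this
    exact mJoin_trans s1 s2
  -- pump a' to contain a + b
  obtain ⟨J₂, hJ₂⟩ := pump hirr hout hN ha'ne (a + b)
    (fun w hw => by rcases Multiset.mem_add.mp hw with h | h
                    exacts [haW w h, hbW w h])
  have h3 : Γ.mJoin a' ((a + b) + J₂) := mJoin_of_mRT hJ₂
  have h4 : Γ.mJoin (a' + A) a' := by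
    have s1 : Γ.mJoin (a' + A) ((a + b) + J₂ + A) := mJoin_add h3 A
    have s2 : Γ.mJoin ((a + b) + J₂ + A) ((a + b) + J₂) := by
      have := mJoin_add h2 J₂
      have e1 : A + (a + b) + J₂ = (a + b) + J₂ + A := by abel
      rwa [e1] at this
    exact mJoin_trans (mJoin_trans s1 s2) (mJoin_symm h3)
  have h5 : Γ.mJoin a a' := by
    have e1 : a' + (b + J) = a' + A := rfl
    exact mJoin_trans (e1 ▸ h1) h4
  exact mJoin_trans (mJoin_trans (mJoin_of_mRT (mRT_mFn s N)) h5)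
    (mJoin_symm (mJoin_of_mRT (mRT_mFn s' N)))
/-! ### Topology: clopen sets are uniform unions of cones -/

theorem isClosed_shift : IsClosed Γ.shift := by
  have : Γ.shift = ⋂ i : ℕ, (fun x : ℕ → Γ.E => (x i, x (i+1))) ⁻¹'
      {p : Γ.E × Γ.E | Γ.t p.1 = Γ.o p.2} := by
    ext x; simp [shift, Set.mem_iInter]
  rw [this]
  refine isClosed_iInter fun i => IsClosed.preimage ?_ (isClosed_discrete _)
  exact (continuous_apply i).prodMk (continuous_apply (i+1))

theorem prefix_ok (x : ℕ → Γ.E) (hx : x ∈ Γ.shift) :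
    ∀ n : ℕ, Γ.pathOk (Γ.o (x 0)) (List.ofFn fun i : Fin n => x i) ∧
      Γ.pathEndAux (Γ.o (x 0)) (List.ofFn fun i : Fin n => x i) = Γ.o (x n) := by
  intro n
  induction n with
  | zero => exact ⟨trivial, rfl⟩
  | succ n ih =>
    have hofn : (List.ofFn fun i : Fin (n+1) => x i)
        = (List.ofFn fun i : Fin n => x i) ++ [x n] := by
      rw [List.ofFn_succ']
      simp [List.concat_eq_append]
    constructor
    · rw [hofn, pathOk_append]
      exact ⟨ih.1, by rw [ih.2]; exact ⟨rfl, trivial⟩⟩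
    · rw [hofn, pathEndAux_append, ih.2]
      show Γ.t (x n) = Γ.o (x (n+1))
      exact hx n

/-- The length-`n` prefix of an infinite path, as a finite path. -/
noncomputable def prefixPath (x : ℕ → Γ.E) (hx : x ∈ Γ.shift) (n : ℕ) : Γ.FinPath :=
  ⟨Γ.o (x 0), List.ofFn fun i : Fin n => x i, (prefix_ok x hx n).1⟩

@[simp] theorem prefixPath_len (x : ℕ → Γ.E) (hx : x ∈ Γ.shift) (n : ℕ) :
    (prefixPath x hx n).edges.length = n := by simp [prefixPath]

theorem pathEnd_prefixPath (x : ℕ → Γ.E) (hx : x ∈ Γ.shift) (n : ℕ) :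
    Γ.pathEnd (prefixPath x hx n) = Γ.o (x n) := (prefix_ok x hx n).2

theorem mem_cone_prefixPath (x : ℕ → Γ.E) (hx : x ∈ Γ.shift) (n : ℕ) :
    x ∈ Γ.cone (prefixPath x hx n) := by
  refine ⟨hx, rfl, fun i h => ?_⟩
  simp only [prefixPath, List.get_eq_getElem, List.getElem_ofFn]

theorem mem_cone_prefixPath_of_agree {x : ℕ → Γ.E} {hx : x ∈ Γ.shift} {n : ℕ}
    (hn : 0 < n) {y : ℕ → Γ.E} (hy : y ∈ Γ.shift) (hagree : ∀ i < n, y i = x i) :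
    y ∈ Γ.cone (prefixPath x hx n) := by
  refine ⟨hy, ?_, fun i h => ?_⟩
  · show Γ.o (y 0) = Γ.o (x 0)
    rw [hagree 0 hn]
  · simp only [prefixPath, List.get_eq_getElem, List.getElem_ofFn]
    exact hagree i (by simpa [prefixPath] using h)

/-- Uniform continuity of clopen membership: a clopen subset of the shift contains,
around each of its points, the full cone of some uniform depth. -/
theorem exists_uniform_depth {D : Set (ℕ → Γ.E)} (hD : D ⊆ Γ.shift)
    (hclopen : IsClopen {z : ↥Γ.shift | (z : ℕ → Γ.E) ∈ D}) (n₀ : ℕ) :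
    ∃ n, 0 < n ∧ n₀ ≤ n ∧
      ∀ x ∈ D, ∀ y ∈ Γ.shift, (∀ i < n, y i = x i) → y ∈ D := by
  haveI : CompactSpace ↥Γ.shift :=
    isCompact_iff_compactSpace.mp ((isClosed_shift (Γ := Γ)).isCompact)
  set K := {z : ↥Γ.shift | (z : ℕ → Γ.E) ∈ D} with hK
  have hKc : IsCompact K := hclopen.isClosed.isCompact
  -- choose a depth around every point of K
  have hdepth : ∀ z : ↥Γ.shift, z ∈ K → ∃ m : ℕ,
      ∀ y ∈ Γ.shift, (∀ i < m, y i = (z : ℕ → Γ.E) i) → y ∈ D := by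
    intro z hz
    obtain ⟨U, hUopen, hUeq⟩ := isOpen_induced_iff.mp hclopen.isOpen
    have hzU : (z : ℕ → Γ.E) ∈ U := by
      have : z ∈ Subtype.val ⁻¹' U := by rw [hUeq]; exact hz
      exact this
    obtain ⟨I, u, hu, hsub⟩ := isOpen_pi_iff.mp hUopen _ hzU
    refine ⟨(I.sup id) + 1, fun y hy hagree => ?_⟩
    have hyU : y ∈ U := by
      apply hsub
      intro i hi
      have : i < I.sup id + 1 := Nat.lt_succ_of_le (Finset.le_sup (f := id) hi)
      rw [hagree i this]
      exact (hu i hi).2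
    have : (⟨y, hy⟩ : ↥Γ.shift) ∈ Subtype.val ⁻¹' U := hyU
    rw [hUeq] at this
    exact this
  classical
  choose! nfun hnfun using hdepth
  -- the open cover of K by agreement neighborhoods
  let V : K → Set ↥Γ.shift := fun z =>
    {w : ↥Γ.shift | ∀ i < nfun z.1, (w : ℕ → Γ.E) i = (z.1 : ℕ → Γ.E) i}
  have hVopen : ∀ z : K, IsOpen (V z) := by
    intro z
    have : V z = ⋂ i ∈ Finset.range (nfun z.1),
        {w : ↥Γ.shift | (w : ℕ → Γ.E) i = (z.1 : ℕ → Γ.E) i} := by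
      ext w; simp only [V, Set.mem_iInter, Finset.mem_range, Set.mem_setOf_eq]
    rw [this]
    refine isOpen_biInter_finset fun i _ => ?_
    show IsOpen ((fun w : ↥Γ.shift => (w : ℕ → Γ.E) i) ⁻¹' {(z.1 : ℕ → Γ.E) i})
    exact IsOpen.preimage ((continuous_apply i).comp continuous_subtype_val)
      (isOpen_discrete _)
  have hcover : K ⊆ ⋃ z : K, V z := fun z hz =>
    Set.mem_iUnion.mpr ⟨⟨z, hz⟩, fun i _ => rfl⟩
  obtain ⟨t, ht⟩ := hKc.elim_finite_subcover V hVopen hcover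
  refine ⟨(t.sup (fun z => nfun z.1)) + n₀ + 1, by omega, by omega, ?_⟩
  intro x hxD y hy hagree
  have hxK : (⟨x, hD hxD⟩ : ↥Γ.shift) ∈ K := hxD
  obtain ⟨z, hzt, hzV⟩ : ∃ z ∈ t, (⟨x, hD hxD⟩ : ↥Γ.shift) ∈ V z := by
    have := ht hxK
    simpa using this
  refine hnfun z.1 z.2 y hy fun i hi => ?_
  have h1 : nfun z.1 ≤ t.sup (fun z => nfun z.1) := Finset.le_sup (f := fun z : K => nfun z.1) hzt
  rw [hagree i (by omega)]
  exact hzV i hi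
/-! ### Cone partitions -/

/-- The union of the cones of a list of paths. -/
def unionL (Γ : FinDigraph) (L : List Γ.FinPath) : Set (ℕ → Γ.E) :=
  ⋃ γ ∈ L, Γ.cone γ

/-- A list of paths whose cones partition a set. -/
def IsConePartition (Γ : FinDigraph) (L : List Γ.FinPath) (D : Set (ℕ → Γ.E)) : Prop :=
  Γ.unionL L = D ∧ L.Pairwise (fun γ δ => Disjoint (Γ.cone γ) (Γ.cone δ))

/-- The multiset of termini of a list of paths. -/
def TM (Γ : FinDigraph) (L : List Γ.FinPath) : Multiset Γ.V := (L.map Γ.pathEnd : List Γ.V)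

@[simp] theorem unionL_nil : Γ.unionL [] = ∅ := by simp [unionL]

@[simp] theorem unionL_cons (γ : Γ.FinPath) (L : List Γ.FinPath) :
    Γ.unionL (γ :: L) = Γ.cone γ ∪ Γ.unionL L := by simp [unionL]

@[simp] theorem unionL_append (L₁ L₂ : List Γ.FinPath) :
    Γ.unionL (L₁ ++ L₂) = Γ.unionL L₁ ∪ Γ.unionL L₂ := by
  induction L₁ with
  | nil => simp
  | cons γ L ih => simp [ih, Set.union_assoc]

@[simp] theorem TM_nil : Γ.TM [] = 0 := rfl

@[simp] theorem TM_cons (γ : Γ.FinPath) (L : List Γ.FinPath) :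
    Γ.TM (γ :: L) = Γ.pathEnd γ ::ₘ Γ.TM L := rfl

@[simp] theorem TM_append (L₁ L₂ : List Γ.FinPath) :
    Γ.TM (L₁ ++ L₂) = Γ.TM L₁ + Γ.TM L₂ := by
  simp [TM]

theorem mem_unionL {L : List Γ.FinPath} {x : ℕ → Γ.E} :
    x ∈ Γ.unionL L ↔ ∃ γ ∈ L, x ∈ Γ.cone γ := by simp [unionL]

/-- The list of one-edge extensions of a path. -/
noncomputable def childList (Γ : FinDigraph) (γ : Γ.FinPath) : List Γ.FinPath :=
  ((Finset.univ.filter (fun e => Γ.o e = Γ.pathEnd γ)).toList).pmap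
    (fun e h => γ.ext1 e h)
    (fun e he => (Finset.mem_filter.mp (Finset.mem_toList.mp he)).2)

theorem TM_childList (γ : Γ.FinPath) : Γ.TM (Γ.childList γ) = Γ.ch (Γ.pathEnd γ) := by
  unfold TM childList ch
  rw [List.map_pmap]
  rw [List.pmap_congr_left (q := fun _ => True) (g := fun e _ => Γ.t e)
      (H₂ := fun _ _ => trivial) _ (fun e _ h₁ _ => pathEnd_ext1 γ e h₁),
    List.pmap_eq_map, ← Multiset.map_coe, Finset.coe_toList]

theorem mem_childList {γ δ : Γ.FinPath} :
    δ ∈ Γ.childList γ ↔ ∃ (e : Γ.E) (h : Γ.o e = Γ.pathEnd γ), δ = γ.ext1 e h := by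
  unfold childList
  rw [List.mem_pmap]
  constructor
  · rintro ⟨e, he, rfl⟩
    exact ⟨e, (Finset.mem_filter.mp (Finset.mem_toList.mp he)).2, rfl⟩
  · rintro ⟨e, he, rfl⟩
    exact ⟨e, by rw [Finset.mem_toList, Finset.mem_filter]; exact ⟨Finset.mem_univ _, he⟩, rfl⟩

theorem unionL_childList (γ : Γ.FinPath) : Γ.unionL (Γ.childList γ) = Γ.cone γ := by
  ext x
  rw [mem_unionL]
  constructor
  · rintro ⟨δ, hδ, hx⟩
    obtain ⟨e, he, rfl⟩ := mem_childList.mp hδ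
    exact cone_ext1_subset hx
  · intro hx
    have he : Γ.o (x γ.edges.length) = Γ.pathEnd γ := o_len_of_mem_cone hx
    refine ⟨γ.ext1 (x γ.edges.length) he, mem_childList.mpr ⟨_, he, rfl⟩, ?_⟩
    exact mem_cone_ext1_iff.mpr ⟨hx, rfl⟩

theorem len_childList {γ δ : Γ.FinPath} (h : δ ∈ Γ.childList γ) :
    δ.edges.length = γ.edges.length + 1 := by
  obtain ⟨e, he, rfl⟩ := mem_childList.mp h
  simp

theorem pairwise_childList (γ : Γ.FinPath) :
    (Γ.childList γ).Pairwise (fun a b => Disjoint (Γ.cone a) (Γ.cone b)) := by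
  unfold childList
  refine List.Pairwise.pmap (Finset.nodup_toList _) _ ?_
  intro e₁ h₁ e₂ h₂ hne
  rw [Set.disjoint_left]
  intro x hxa hxb
  have g1 := (mem_cone_ext1_iff.mp hxa).2
  have g2 := (mem_cone_ext1_iff.mp hxb).2
  exact hne (g1 ▸ g2)

theorem cone_subset_of_mem_childList {γ δ : Γ.FinPath} (h : δ ∈ Γ.childList γ) :
    Γ.cone δ ⊆ Γ.cone γ := by
  obtain ⟨e, he, rfl⟩ := mem_childList.mp h
  exact cone_ext1_subset
/-! ### Lifting multiset expansions to partitions -/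

theorem step_lift {L : List Γ.FinPath} {D : Set (ℕ → Γ.E)}
    (hpart : Γ.IsConePartition L D) {s₂ : Multiset Γ.V} (hS : Γ.mstep (Γ.TM L) s₂) :
    ∃ L', Γ.IsConePartition L' D ∧ Γ.TM L' = s₂ := by
  obtain ⟨u, s', hcons, rfl⟩ := hS
  have hu : u ∈ Γ.TM L := by rw [hcons]; exact Multiset.mem_cons_self _ _
  obtain ⟨γ, hγL, hγu⟩ := List.mem_map.mp (Multiset.mem_coe.mp hu)
  obtain ⟨l₁, l₂, rfl⟩ := List.append_of_mem hγL
  have hTM : Γ.TM (l₁ ++ γ :: l₂) = u ::ₘ (Γ.TM l₁ + Γ.TM l₂) := by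
    rw [TM_append, TM_cons, hγu]
    rw [Multiset.add_cons]
  have hs' : s' = Γ.TM l₁ + Γ.TM l₂ := by
    have := hcons.symm.trans hTM
    exact (Multiset.cons_inj_right u).mp this
  refine ⟨l₁ ++ (Γ.childList γ ++ l₂), ⟨?_, ?_⟩, ?_⟩
  · rw [unionL_append, unionL_append, unionL_childList]
    rw [← hpart.1, unionL_append, unionL_cons]
  · have hp := hpart.2
    rw [List.pairwise_append] at hp
    obtain ⟨hp1, hp2, hp3⟩ := hp
    rw [List.pairwise_cons] at hp2
    obtain ⟨hγl₂, hp4⟩ := hp2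
    rw [List.pairwise_append]
    refine ⟨hp1, ?_, ?_⟩
    · rw [List.pairwise_append]
      refine ⟨pairwise_childList γ, hp4, ?_⟩
      intro a ha b hb
      exact Disjoint.mono_left (cone_subset_of_mem_childList ha) (hγl₂ b hb)
    · intro a ha b hb
      rcases List.mem_append.mp hb with hb | hb
      · exact Disjoint.mono_right (cone_subset_of_mem_childList hb)
          (hp3 a ha γ (List.mem_cons_self))
      · exact hp3 a ha b (List.mem_cons_of_mem _ hb)
  · rw [TM_append, TM_append, TM_childList, hγu, hs']
    abel

theorem rt_lift {L : List Γ.FinPath} {D : Set (ℕ → Γ.E)}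
    (hpart : Γ.IsConePartition L D) {s₂ : Multiset Γ.V} (hS : Γ.mRT (Γ.TM L) s₂) :
    ∃ L', Γ.IsConePartition L' D ∧ Γ.TM L' = s₂ := by
  induction hS with
  | refl => exact ⟨L, hpart, rfl⟩
  | tail _ hstep ih =>
    obtain ⟨L', hL', hTM⟩ := ih
    exact step_lift hL' (hTM ▸ hstep)

/-! ### Full expansions of a path to uniform depth -/

/-- All extensions of a path by `m` edges. -/
noncomputable def extListN (Γ : FinDigraph) : ℕ → Γ.FinPath → List Γ.FinPath
  | 0, γ => [γ]
  | (m+1), γ => (Γ.childList γ).flatMap (Γ.extListN m)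

theorem unionL_flatMap (l : List Γ.FinPath) (g : Γ.FinPath → List Γ.FinPath) :
    Γ.unionL (l.flatMap g) = ⋃ γ ∈ l, Γ.unionL (g γ) := by
  induction l with
  | nil => simp
  | cons a l ih => simp [List.flatMap_cons, ih]

theorem TM_flatMap (l : List Γ.FinPath) (g : Γ.FinPath → List Γ.FinPath) :
    Γ.TM (l.flatMap g) = (l.map (fun a => Γ.TM (g a))).sum := by
  induction l with
  | nil => simp
  | cons a l ih => simp [List.flatMap_cons, ih]

theorem TM_eq_sum_singleton (l : List Γ.FinPath) :
    Γ.TM l = (l.map (fun γ => ({Γ.pathEnd γ} : Multiset Γ.V))).sum := by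
  induction l with
  | nil => simp
  | cons a l ih =>
    rw [TM_cons, ih]
    simp [Multiset.singleton_add]

theorem mFn_zero (m : ℕ) : Γ.mF^[m] (0 : Multiset Γ.V) = 0 := by
  induction m with
  | zero => rfl
  | succ m ih => rw [Function.iterate_succ_apply', ih]; rfl

theorem mFn_list_sum (m : ℕ) (l : List Γ.FinPath) (f : Γ.FinPath → Multiset Γ.V) :
    Γ.mF^[m] ((l.map f).sum) = (l.map (fun a => Γ.mF^[m] (f a))).sum := by
  induction l with
  | nil => simp [mFn_zero]
  | cons a l ih => simp [mFn_add, ih]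

theorem pairwise_flatMap {l : List Γ.FinPath} {g : Γ.FinPath → List Γ.FinPath}
    (hl : l.Pairwise (fun a b => Disjoint (Γ.cone a) (Γ.cone b)))
    (hg : ∀ a ∈ l, (g a).Pairwise (fun a b => Disjoint (Γ.cone a) (Γ.cone b)))
    (hsub : ∀ a ∈ l, ∀ x ∈ g a, Γ.cone x ⊆ Γ.cone a) :
    (l.flatMap g).Pairwise (fun a b => Disjoint (Γ.cone a) (Γ.cone b)) := by
  induction l with
  | nil => simp
  | cons a l ih =>
    rw [List.flatMap_cons, List.pairwise_append]
    rw [List.pairwise_cons] at hl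
    refine ⟨hg a (List.mem_cons_self),
      ih hl.2 (fun b hb => hg b (List.mem_cons_of_mem _ hb))
        (fun b hb => hsub b (List.mem_cons_of_mem _ hb)), ?_⟩
    intro x hx y hy
    obtain ⟨b, hb, hyb⟩ := List.mem_flatMap.mp hy
    exact Disjoint.mono (hsub a (List.mem_cons_self) x hx)
      (hsub b (List.mem_cons_of_mem _ hb) y hyb) (hl.1 b hb)

theorem extListN_spec (m : ℕ) (γ : Γ.FinPath) :
    Γ.unionL (Γ.extListN m γ) = Γ.cone γ ∧
    (Γ.extListN m γ).Pairwise (fun a b => Disjoint (Γ.cone a) (Γ.cone b)) ∧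
    (∀ δ ∈ Γ.extListN m γ, δ.edges.length = γ.edges.length + m) ∧
    Γ.TM (Γ.extListN m γ) = Γ.mF^[m] {Γ.pathEnd γ} := by
  induction m generalizing γ with
  | zero =>
    refine ⟨by simp [extListN], by simp [extListN], by simp [extListN], ?_⟩
    simp [extListN, TM]
  | succ m ih =>
    have hbind : Γ.extListN (m+1) γ = (Γ.childList γ).flatMap (Γ.extListN m) := rfl
    refine ⟨?_, ?_, ?_, ?_⟩
    · rw [hbind, unionL_flatMap]
      rw [show (⋃ δ ∈ Γ.childList γ, Γ.unionL (Γ.extListN m δ))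
          = ⋃ δ ∈ Γ.childList γ, Γ.cone δ from
        Set.iUnion₂_congr (fun δ _ => (ih δ).1)]
      exact unionL_childList γ
    · rw [hbind]
      refine pairwise_flatMap (pairwise_childList γ) (fun a _ => (ih a).2.1) ?_
      intro a _ x hx
      rw [← (ih a).1]
      exact fun z hz => mem_unionL.mpr ⟨x, hx, hz⟩
    · intro δ hδ
      rw [hbind] at hδ
      obtain ⟨b, hb, hδb⟩ := List.mem_flatMap.mp hδ
      rw [(ih b).2.2.1 δ hδb, len_childList hb]
      omega
    · rw [hbind, TM_flatMap]
      have h1 : (Γ.childList γ).map (fun a => Γ.TM (Γ.extListN m a))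
          = (Γ.childList γ).map (fun a => Γ.mF^[m] ({Γ.pathEnd a} : Multiset Γ.V)) :=
        List.map_congr_left (fun a _ => (ih a).2.2.2)
      rw [h1, ← mFn_list_sum, ← TM_eq_sum_singleton, TM_childList]
      rw [Function.iterate_succ_apply]
      congr 1
      rw [show ({Γ.pathEnd γ} : Multiset Γ.V) = Γ.pathEnd γ ::ₘ 0 from rfl, mF_cons]
      simp
/-! ### Uniform partitions and joinability -/

theorem nodup_of_pairwise_disjoint (hout : ∀ v : Γ.V, ∃ e : Γ.E, Γ.o e = v)
    {L : List Γ.FinPath}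
    (hpw : L.Pairwise (fun a b => Disjoint (Γ.cone a) (Γ.cone b))) : L.Nodup := by
  refine hpw.imp ?_
  intro a b hd
  intro heq
  subst heq
  obtain ⟨x, hx⟩ := cone_nonempty hout a
  exact Set.disjoint_left.mp hd hx hx

theorem unif_part_TM (hout : ∀ v : Γ.V, ∃ e : Γ.E, Γ.o e = v)
    {L₁ L₂ : List Γ.FinPath} {D : Set (ℕ → Γ.E)} {n : ℕ}
    (h₁ : Γ.IsConePartition L₁ D) (h₂ : Γ.IsConePartition L₂ D)
    (hl₁ : ∀ γ ∈ L₁, γ.edges.length = n) (hl₂ : ∀ γ ∈ L₂, γ.edges.length = n) :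
    Γ.TM L₁ = Γ.TM L₂ := by
  have hmem : ∀ (A B : List Γ.FinPath), Γ.IsConePartition A D → Γ.IsConePartition B D →
      (∀ γ ∈ A, γ.edges.length = n) → (∀ γ ∈ B, γ.edges.length = n) →
      ∀ γ ∈ A, γ ∈ B := by
    intro A B hA hB hlA hlB γ hγ
    obtain ⟨x, hx⟩ := cone_nonempty hout γ
    have hxD : x ∈ D := by
      rw [← hA.1]; exact mem_unionL.mpr ⟨γ, hγ, hx⟩
    rw [← hB.1] at hxD
    obtain ⟨δ, hδ, hxδ⟩ := mem_unionL.mp hxD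
    have : γ = δ := eq_of_mem_cone_same_len (by rw [hlA γ hγ, hlB δ hδ]) hx hxδ
    rwa [this]
  have hco : (↑L₁ : Multiset Γ.FinPath) = ↑L₂ := by
    rw [Multiset.Nodup.ext (Multiset.coe_nodup.mpr (nodup_of_pairwise_disjoint hout h₁.2))
      (Multiset.coe_nodup.mpr (nodup_of_pairwise_disjoint hout h₂.2))]
    intro γ
    rw [Multiset.mem_coe, Multiset.mem_coe]
    exact ⟨hmem L₁ L₂ h₁ h₂ hl₁ hl₂ γ, hmem L₂ L₁ h₂ h₁ hl₂ hl₁ γ⟩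
  show ((L₁.map Γ.pathEnd : List Γ.V) : Multiset Γ.V) = ↑(L₂.map Γ.pathEnd)
  rw [← Multiset.map_coe, ← Multiset.map_coe, hco]

theorem mRT_list_sum {l : List Γ.FinPath} {f g : Γ.FinPath → Multiset Γ.V}
    (h : ∀ a ∈ l, Γ.mRT (f a) (g a)) :
    Γ.mRT ((l.map f).sum) ((l.map g).sum) := by
  induction l with
  | nil => exact Relation.ReflTransGen.refl
  | cons a l ih =>
    simp only [List.map_cons, List.sum_cons]
    have h1 : Γ.mRT (f a + (l.map f).sum) (g a + (l.map f).sum) :=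
      mRT_add (h a (List.mem_cons_self)) _
    have h2 : Γ.mRT (g a + (l.map f).sum) (g a + (l.map g).sum) := by
      have := mRT_add (ih (fun b hb => h b (List.mem_cons_of_mem _ hb))) (g a)
      rwa [add_comm _ (g a), add_comm _ (g a)] at this
    exact h1.trans h2

theorem expand_to_uniform {L : List Γ.FinPath} {D : Set (ℕ → Γ.E)} {n : ℕ}
    (hpart : Γ.IsConePartition L D) (hn : ∀ γ ∈ L, γ.edges.length ≤ n) :
    ∃ L', Γ.IsConePartition L' D ∧ (∀ γ ∈ L', γ.edges.length = n) ∧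
      Γ.mRT (Γ.TM L) (Γ.TM L') := by
  refine ⟨L.flatMap (fun γ => Γ.extListN (n - γ.edges.length) γ), ⟨?_, ?_⟩, ?_, ?_⟩
  · rw [unionL_flatMap]
    rw [show (⋃ γ ∈ L, Γ.unionL (Γ.extListN (n - γ.edges.length) γ))
        = ⋃ γ ∈ L, Γ.cone γ from
      Set.iUnion₂_congr (fun γ _ => (extListN_spec _ γ).1)]
    exact hpart.1
  · refine pairwise_flatMap hpart.2 (fun a _ => (extListN_spec _ a).2.1) ?_
    intro a _ x hx
    rw [← (extListN_spec (n - a.edges.length) a).1]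
    exact fun z hz => mem_unionL.mpr ⟨x, hx, hz⟩
  · intro δ hδ
    obtain ⟨γ, hγ, hδγ⟩ := List.mem_flatMap.mp hδ
    rw [(extListN_spec _ γ).2.2.1 δ hδγ]
    have := hn γ hγ
    omega
  · rw [TM_flatMap]
    have h1 : L.map (fun γ => Γ.TM (Γ.extListN (n - γ.edges.length) γ))
        = L.map (fun γ => Γ.mF^[n - γ.edges.length] ({Γ.pathEnd γ} : Multiset Γ.V)) :=
      List.map_congr_left (fun γ _ => (extListN_spec _ γ).2.2.2)
    rw [h1, TM_eq_sum_singleton]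
    exact mRT_list_sum (fun γ _ => mRT_mFn _ _)

theorem le_list_sum {l : List ℕ} {a : ℕ} (h : a ∈ l) : a ≤ l.sum := by
  induction l with
  | nil => simp at h
  | cons b l ih =>
    rcases List.mem_cons.mp h with rfl | h
    · simp
    · have := ih h
      simp
      omega

theorem partitions_join (hout : ∀ v : Γ.V, ∃ e : Γ.E, Γ.o e = v)
    {L₁ L₂ : List Γ.FinPath} {D : Set (ℕ → Γ.E)}
    (h₁ : Γ.IsConePartition L₁ D) (h₂ : Γ.IsConePartition L₂ D) :
    Γ.mJoin (Γ.TM L₁) (Γ.TM L₂) := by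
  set n := ((L₁ ++ L₂).map (fun γ => γ.edges.length)).sum with hn
  have hb : ∀ γ ∈ L₁ ++ L₂, γ.edges.length ≤ n :=
    fun γ hγ => le_list_sum (List.mem_map.mpr ⟨γ, hγ, rfl⟩)
  obtain ⟨L₁', hp₁, hl₁, hrt₁⟩ := expand_to_uniform h₁
    (fun γ hγ => hb γ (List.mem_append.mpr (Or.inl hγ)))
  obtain ⟨L₂', hp₂, hl₂, hrt₂⟩ := expand_to_uniform h₂
    (fun γ hγ => hb γ (List.mem_append.mpr (Or.inr hγ)))
  have heq : Γ.TM L₁' = Γ.TM L₂' := unif_part_TM hout hp₁ hp₂ hl₁ hl₂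
  exact ⟨Γ.TM L₁', hrt₁, heq ▸ hrt₂⟩
/-! ### Partitioning clopen sets into cones -/

theorem finpath_len_finite (n : ℕ) : {γ : Γ.FinPath | γ.edges.length = n}.Finite := by
  have hfin : ((fun γ : Γ.FinPath => (γ.start, γ.edges)) ''
      {γ : Γ.FinPath | γ.edges.length = n}).Finite := by
    refine Set.Finite.subset (Set.Finite.prod (Set.finite_univ (α := Γ.V))
      (List.finite_length_eq Γ.E n)) ?_
    rintro ⟨v, l⟩ ⟨γ, hγ, heq⟩
    refine ⟨Set.mem_univ _, ?_⟩
    have : γ.edges = l := congrArg Prod.snd heq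
    show l.length = n
    rw [← this]; exact hγ
  exact Set.Finite.of_finite_image hfin
    (fun a _ b _ h => FinPath.ext' (congrArg Prod.fst h) (congrArg Prod.snd h))

theorem clopen_partition {D : Set (ℕ → Γ.E)} (hDsub : D ⊆ Γ.shift)
    (hclopen : IsClopen {z : ↥Γ.shift | (z : ℕ → Γ.E) ∈ D})
    (hout : ∀ v : Γ.V, ∃ e : Γ.E, Γ.o e = v) :
    ∃ L, Γ.IsConePartition L D := by
  obtain ⟨n, hn0, -, hkey⟩ := exists_uniform_depth hDsub hclopen 0
  set S := {γ : Γ.FinPath | γ.edges.length = n ∧ Γ.cone γ ⊆ D} with hS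
  have hSfin : S.Finite := (finpath_len_finite n).subset (fun γ hγ => hγ.1)
  refine ⟨hSfin.toFinset.toList, ?_, ?_⟩
  · apply Set.eq_of_subset_of_subset
    · intro x hx
      obtain ⟨γ, hγ, hxγ⟩ := mem_unionL.mp hx
      rw [Finset.mem_toList, Set.Finite.mem_toFinset] at hγ
      exact hγ.2 hxγ
    · intro x hx
      have hxs : x ∈ Γ.shift := hDsub hx
      refine mem_unionL.mpr ⟨prefixPath x hxs n, ?_, mem_cone_prefixPath x hxs n⟩
      rw [Finset.mem_toList, Set.Finite.mem_toFinset]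
      refine ⟨by simp, ?_⟩
      intro y hy
      refine hkey x hx y hy.1 (fun i hi => ?_)
      have := hy.2.2 i (by simpa using hi)
      rw [this]
      simp [prefixPath]
  · refine List.Pairwise.imp_of_mem ?_ (hSfin.toFinset.nodup_toList)
    intro a b ha hb hne
    rw [Finset.mem_toList, Set.Finite.mem_toFinset] at ha hb
    rw [Set.disjoint_left]
    intro x hxa hxb
    exact hne (eq_of_mem_cone_same_len (by rw [ha.1, hb.1]) hxa hxb)

theorem TM_ne_zero {L : List Γ.FinPath} {D : Set (ℕ → Γ.E)}
    (hpart : Γ.IsConePartition L D) (hne : D.Nonempty) : Γ.TM L ≠ 0 := by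
  obtain ⟨x, hx⟩ := hne
  rw [← hpart.1] at hx
  obtain ⟨γ, hγ, -⟩ := mem_unionL.mp hx
  intro h0
  have : Γ.pathEnd γ ∈ Γ.TM L := Multiset.mem_coe.mpr (List.mem_map.mpr ⟨γ, hγ, rfl⟩)
  rw [h0] at this
  simp at this

theorem match_lists : ∀ (L₁ L₂ : List Γ.FinPath), Γ.TM L₁ = Γ.TM L₂ →
    ∃ L₂' : List Γ.FinPath, L₂'.Perm L₂ ∧ L₁.map Γ.pathEnd = L₂'.map Γ.pathEnd := by
  intro L₁
  induction L₁ with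
  | nil =>
    intro L₂ h
    have : L₂.map Γ.pathEnd = [] := by
      have := h.symm
      rw [TM_nil] at this
      exact (Multiset.coe_eq_zero _).mp this
    have hL₂ : L₂ = [] := by
      cases L₂ with
      | nil => rfl
      | cons a l => simp at this
    exact ⟨[], by rw [hL₂], rfl⟩
  | cons γ tl ih =>
    intro L₂ h
    have hmem : Γ.pathEnd γ ∈ Γ.TM L₂ := by
      rw [← h, TM_cons]; exact Multiset.mem_cons_self _ _
    obtain ⟨δ, hδ, hδe⟩ := List.mem_map.mp (Multiset.mem_coe.mp hmem)
    obtain ⟨s, t2, rfl⟩ := List.append_of_mem hδ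
    have htl : Γ.TM tl = Γ.TM (s ++ t2) := by
      have h2 : Γ.TM (s ++ δ :: t2) = Γ.pathEnd γ ::ₘ Γ.TM (s ++ t2) := by
        rw [TM_append, TM_cons, hδe, Multiset.add_cons, TM_append]
      rw [h2] at h
      rw [TM_cons] at h
      exact (Multiset.cons_inj_right _).mp h
    obtain ⟨L'', hperm, hmap⟩ := ih (s ++ t2) htl
    refine ⟨δ :: L'', ?_, ?_⟩
    · exact (hperm.cons δ).trans List.perm_middle.symm
    · rw [List.map_cons, List.map_cons, hmap, hδe]

theorem partition_perm {L L' : List Γ.FinPath} {D : Set (ℕ → Γ.E)}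
    (hperm : L.Perm L') (hpart : Γ.IsConePartition L D) : Γ.IsConePartition L' D := by
  refine ⟨?_, ?_⟩
  · rw [← hpart.1]
    ext x
    rw [mem_unionL, mem_unionL]
    exact ⟨fun ⟨γ, hγ, hx⟩ => ⟨γ, hperm.symm.subset hγ, hx⟩,
      fun ⟨γ, hγ, hx⟩ => ⟨γ, hperm.subset hγ, hx⟩⟩
  · exact (List.Perm.pairwise_iff (fun h => h.symm) hperm).mp hpart.2

/-! ### Clopen sets from cones -/

theorem clopen_coord (i : ℕ) (S : Set Γ.E) :
    IsClopen ((fun z : ↥Γ.shift => (z : ℕ → Γ.E) i) ⁻¹' S) := by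
  have hc : Continuous (fun z : ↥Γ.shift => (z : ℕ → Γ.E) i) :=
    (continuous_apply i).comp continuous_subtype_val
  exact ⟨IsClosed.preimage hc (isClosed_discrete S), IsOpen.preimage hc (isOpen_discrete S)⟩

theorem cone_clopen (γ : Γ.FinPath) : IsClopen {z : ↥Γ.shift | (z : ℕ → Γ.E) ∈ Γ.cone γ} := by
  have hset : {z : ↥Γ.shift | (z : ℕ → Γ.E) ∈ Γ.cone γ}
      = ((fun z : ↥Γ.shift => (z : ℕ → Γ.E) 0) ⁻¹' {e | Γ.o e = γ.start}) ∩
        ⋂ (i : Fin γ.edges.length),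
          ((fun z : ↥Γ.shift => (z : ℕ → Γ.E) i.1) ⁻¹' {γ.edges.get i}) := by
    ext z
    simp only [Set.mem_setOf_eq, Set.mem_inter_iff, Set.mem_iInter, Set.mem_preimage,
      Set.mem_singleton_iff]
    constructor
    · intro hz
      exact ⟨hz.2.1, fun i => hz.2.2 i.1 i.2⟩
    · intro hz
      exact ⟨z.2, hz.1, fun i hi => hz.2 ⟨i, hi⟩⟩
  rw [hset]
  exact IsClopen.inter (clopen_coord 0 _)
    (isClopen_iInter_of_finite (fun i => clopen_coord i.1 _))

theorem unionL_clopen (L : List Γ.FinPath) :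
    IsClopen {z : ↥Γ.shift | (z : ℕ → Γ.E) ∈ Γ.unionL L} := by
  induction L with
  | nil => simpa using isClopen_empty
  | cons γ l ih =>
    have : {z : ↥Γ.shift | (z : ℕ → Γ.E) ∈ Γ.unionL (γ :: l)}
        = {z : ↥Γ.shift | (z : ℕ → Γ.E) ∈ Γ.cone γ}
          ∪ {z : ↥Γ.shift | (z : ℕ → Γ.E) ∈ Γ.unionL l} := by
      ext z; simp [Set.mem_union]
    rw [this]
    exact IsClopen.union (cone_clopen γ) ih
/-! ### The Thompson map determined by a list of matched cone pairs -/

/-- The piecewise canonical-similarity map determined by a list of cone pairs. -/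
noncomputable def thompsonFun (Γ : FinDigraph) (LP : List (Γ.FinPath × Γ.FinPath))
    (x : ℕ → Γ.E) : ℕ → Γ.E :=
  match LP.find? (fun p => decide (x ∈ Γ.cone p.1)) with
  | some p => Γ.splice p.1 p.2 x
  | none => x

theorem pair_unique (hout : ∀ v : Γ.V, ∃ e : Γ.E, Γ.o e = v)
    {LP : List (Γ.FinPath × Γ.FinPath)}
    (hdisj : LP.Pairwise (fun p q => Disjoint (Γ.cone p.1) (Γ.cone q.1)))
    {p q : Γ.FinPath × Γ.FinPath} (hp : p ∈ LP) (hq : q ∈ LP) {x : ℕ → Γ.E}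
    (hxp : x ∈ Γ.cone p.1) (hxq : x ∈ Γ.cone q.1) : p = q := by
  by_contra hne
  haveI : Std.Symm (fun p q : Γ.FinPath × Γ.FinPath =>
    Disjoint (Γ.cone p.1) (Γ.cone q.1)) := ⟨fun a b h => h.symm⟩
  have := List.Pairwise.forall (R := fun p q : Γ.FinPath × Γ.FinPath =>
    Disjoint (Γ.cone p.1) (Γ.cone q.1)) hdisj hp hq hne
  exact Set.disjoint_left.mp this hxp hxq

theorem thompsonFun_eq (hout : ∀ v : Γ.V, ∃ e : Γ.E, Γ.o e = v)
    {LP : List (Γ.FinPath × Γ.FinPath)}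
    (hdisj : LP.Pairwise (fun p q => Disjoint (Γ.cone p.1) (Γ.cone q.1)))
    {p : Γ.FinPath × Γ.FinPath} (hp : p ∈ LP) {x : ℕ → Γ.E}
    (hx : x ∈ Γ.cone p.1) : Γ.thompsonFun LP x = Γ.splice p.1 p.2 x := by
  have hsome : (LP.find? (fun p => decide (x ∈ Γ.cone p.1))).isSome :=
    List.find?_isSome.mpr ⟨p, hp, by simpa using hx⟩
  obtain ⟨q, hq⟩ := Option.isSome_iff_exists.mp hsome
  have hqx : x ∈ Γ.cone q.1 := by simpa using List.find?_some hq
  have hqLP : q ∈ LP := List.mem_of_find?_eq_some hq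
  have : q = p := pair_unique hout hdisj hqLP hp hqx hx
  subst this
  unfold thompsonFun
  rw [hq]

theorem thompsonFun_not_mem {LP : List (Γ.FinPath × Γ.FinPath)} {x : ℕ → Γ.E}
    (hx : ∀ p ∈ LP, x ∉ Γ.cone p.1) : Γ.thompsonFun LP x = x := by
  have hnone : LP.find? (fun p => decide (x ∈ Γ.cone p.1)) = none := by
    rw [List.find?_eq_none]
    intro p hp
    simpa using hx p hp
  unfold thompsonFun
  rw [hnone]

/-- Main inversion lemma for `thompsonFun`. -/
theorem thompson_inv (hout : ∀ v : Γ.V, ∃ e : Γ.E, Γ.o e = v)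
    {LP : List (Γ.FinPath × Γ.FinPath)} {E : Set (ℕ → Γ.E)}
    (hfst : Γ.IsConePartition (LP.map Prod.fst) E)
    (hsnd : Γ.IsConePartition (LP.map Prod.snd) E)
    (hend : ∀ p ∈ LP, Γ.pathEnd p.1 = Γ.pathEnd p.2) :
    ∀ x ∈ E, Γ.thompsonFun LP x ∈ E ∧
      Γ.thompsonFun (LP.map Prod.swap) (Γ.thompsonFun LP x) = x := by
  intro x hx
  have hdisj : LP.Pairwise (fun p q => Disjoint (Γ.cone p.1) (Γ.cone q.1)) :=
    (List.pairwise_map (R := fun γ δ : Γ.FinPath => Disjoint (Γ.cone γ) (Γ.cone δ))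
      (f := Prod.fst)).mp hfst.2
  have hdisj' : (LP.map Prod.swap).Pairwise
      (fun p q => Disjoint (Γ.cone p.1) (Γ.cone q.1)) := by
    rw [List.pairwise_map]
    exact (List.pairwise_map (R := fun γ δ : Γ.FinPath => Disjoint (Γ.cone γ) (Γ.cone δ))
      (f := Prod.snd)).mp hsnd.2
  obtain ⟨γ, hγ, hxγ⟩ : ∃ γ ∈ LP.map Prod.fst, x ∈ Γ.cone γ := by
    rw [← mem_unionL, hfst.1]; exact hx
  obtain ⟨p, hpLP, rfl⟩ := List.mem_map.mp hγ
  have heval : Γ.thompsonFun LP x = Γ.splice p.1 p.2 x := thompsonFun_eq hout hdisj hpLP hxγ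
  have hmem2 : Γ.splice p.1 p.2 x ∈ Γ.cone p.2 := splice_mem_cone (hend p hpLP) hxγ
  constructor
  · rw [heval, ← hsnd.1]
    exact mem_unionL.mpr ⟨p.2, List.mem_map.mpr ⟨p, hpLP, rfl⟩, hmem2⟩
  · rw [heval]
    have hswap : p.swap ∈ LP.map Prod.swap := List.mem_map.mpr ⟨p, hpLP, rfl⟩
    have : Γ.thompsonFun (LP.map Prod.swap) (Γ.splice p.1 p.2 x)
        = Γ.splice p.swap.1 p.swap.2 (Γ.splice p.1 p.2 x) :=
      thompsonFun_eq hout hdisj' hswap hmem2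
    rw [this]
    exact splice_splice hxγ
/-! ### Building a Thompson element from matched partitions -/

theorem partition_append_compl {Lh Lt : List Γ.FinPath} {E' : Set (ℕ → Γ.E)}
    (hpw : Lh.Pairwise (fun γ δ => Disjoint (Γ.cone γ) (Γ.cone δ)))
    (hUE : Γ.unionL Lh ⊆ E')
    (ht : Γ.IsConePartition Lt (E' \ Γ.unionL Lh)) :
    Γ.IsConePartition (Lh ++ Lt) E' := by
  constructor
  · rw [unionL_append, ht.1, Set.union_diff_cancel hUE]
  · rw [List.pairwise_append]
    refine ⟨hpw, ht.2, ?_⟩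
    intro a ha b hb
    have hca : Γ.cone a ⊆ Γ.unionL Lh := fun z hz => mem_unionL.mpr ⟨a, ha, hz⟩
    have hcb : Γ.cone b ⊆ E' \ Γ.unionL Lh := by
      rw [← ht.1]; exact fun z hz => mem_unionL.mpr ⟨b, hb, hz⟩
    exact Disjoint.mono hca hcb Set.disjoint_sdiff_right

theorem build_thompson (hout : ∀ v : Γ.V, ∃ e : Γ.E, Γ.o e = v)
    {LP : List (Γ.FinPath × Γ.FinPath)} {E : Set (ℕ → Γ.E)}
    (hfst : Γ.IsConePartition (LP.map Prod.fst) E)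
    (hsnd : Γ.IsConePartition (LP.map Prod.snd) E)
    (hend : ∀ p ∈ LP, Γ.pathEnd p.1 = Γ.pathEnd p.2) :
    ∃ f : Equiv.Perm ↥E, Γ.IsThompson E f ∧
      ∀ p ∈ LP, Γ.RealizesCanonSim E f p.1 p.2 := by
  have hswapswap : (LP.map Prod.swap).map Prod.swap = LP := by
    rw [List.map_map]
    have : (Prod.swap ∘ Prod.swap : Γ.FinPath × Γ.FinPath → Γ.FinPath × Γ.FinPath) = id := by
      funext p; simp
    rw [this, List.map_id]
  have hswapfst : (LP.map Prod.swap).map Prod.fst = LP.map Prod.snd := by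
    rw [List.map_map]; rfl
  have hswapsnd : (LP.map Prod.swap).map Prod.snd = LP.map Prod.fst := by
    rw [List.map_map]; rfl
  have hinv1 := thompson_inv hout hfst hsnd hend
  have hinv2 := thompson_inv hout (E := E) (LP := LP.map Prod.swap)
    (by rw [hswapfst]; exact hsnd) (by rw [hswapsnd]; exact hfst)
    (by intro p hp
        obtain ⟨q, hq, rfl⟩ := List.mem_map.mp hp
        exact (hend q hq).symm)
  have hdisj : LP.Pairwise (fun p q => Disjoint (Γ.cone p.1) (Γ.cone q.1)) :=
    (List.pairwise_map (R := fun γ δ : Γ.FinPath => Disjoint (Γ.cone γ) (Γ.cone δ))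
      (f := Prod.fst)).mp hfst.2
  refine ⟨{ toFun := fun x => ⟨Γ.thompsonFun LP x.1, (hinv1 x.1 x.2).1⟩
            invFun := fun y => ⟨Γ.thompsonFun (LP.map Prod.swap) y.1, (hinv2 y.1 y.2).1⟩
            left_inv := fun x => Subtype.ext (hinv1 x.1 x.2).2
            right_inv := fun y => Subtype.ext (by
              have := (hinv2 y.1 y.2).2
              rwa [hswapswap] at this) }, ?_, ?_⟩
  · -- IsThompson
    refine ⟨LP.length, fun i => (LP.get i).1, fun i => (LP.get i).2, ?_, ?_, ?_, ?_, ?_, ?_⟩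
    · intro i
      exact hend (LP.get i) ((LP.get_mem i : LP.get i ∈ LP))
    · rw [← hfst.1]
      ext x
      rw [mem_unionL, Set.mem_iUnion]
      constructor
      · rintro ⟨γ, hγ, hx⟩
        obtain ⟨p, hp, rfl⟩ := List.mem_map.mp hγ
        obtain ⟨n, hn, rfl⟩ := List.mem_iff_getElem.mp hp
        exact ⟨⟨n, hn⟩, hx⟩
      · rintro ⟨i, hx⟩
        exact ⟨(LP.get i).1, List.mem_map.mpr ⟨LP.get i, (LP.get_mem i : LP.get i ∈ LP), rfl⟩, hx⟩
    · intro i j hne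
      have := List.pairwise_iff_getElem.mp hdisj
      rcases lt_or_gt_of_ne hne with h | h
      · exact this i.1 j.1 i.2 j.2 h
      · exact (this j.1 i.1 j.2 i.2 h).symm
    · rw [← hsnd.1]
      ext x
      rw [mem_unionL, Set.mem_iUnion]
      constructor
      · rintro ⟨γ, hγ, hx⟩
        obtain ⟨p, hp, rfl⟩ := List.mem_map.mp hγ
        obtain ⟨n, hn, rfl⟩ := List.mem_iff_getElem.mp hp
        exact ⟨⟨n, hn⟩, hx⟩
      · rintro ⟨i, hx⟩
        exact ⟨(LP.get i).2, List.mem_map.mpr ⟨LP.get i, (LP.get_mem i : LP.get i ∈ LP), rfl⟩, hx⟩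
    · intro i j hne
      have hdisj2 : LP.Pairwise (fun p q => Disjoint (Γ.cone p.2) (Γ.cone q.2)) :=
        (List.pairwise_map (R := fun γ δ : Γ.FinPath => Disjoint (Γ.cone γ) (Γ.cone δ))
          (f := Prod.snd)).mp hsnd.2
      have := List.pairwise_iff_getElem.mp hdisj2
      rcases lt_or_gt_of_ne hne with h | h
      · exact this i.1 j.1 i.2 j.2 h
      · exact (this j.1 i.1 j.2 i.2 h).symm
    · intro i x hx hcone
      exact thompsonFun_eq hout hdisj ((LP.get_mem i : LP.get i ∈ LP)) hcone
  · intro p hp x hx hcone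
    exact thompsonFun_eq hout hdisj hp hcone
/-! ### The main theorem -/

theorem mapping_cones_aux (Γ : FinDigraph) (hcore : Γ.HasIrreducibleCore)
    (E : Set (ℕ → Γ.E)) (hEsub : E ⊆ Γ.shift) (hEne : E.Nonempty)
    (hEclopen : Γ.ClopenIn E)
    (k : ℕ) (α β : Fin k → Γ.FinPath)
    (hαE : ∀ i, Γ.cone (α i) ⊆ E) (hβE : ∀ i, Γ.cone (β i) ⊆ E)
    (hαdisj : Pairwise fun i j => Disjoint (Γ.cone (α i)) (Γ.cone (α j)))
    (hβdisj : Pairwise fun i j => Disjoint (Γ.cone (β i)) (Γ.cone (β j)))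
    (hend : ∀ i, Γ.pathEnd (α i) = Γ.pathEnd (β i))
    (hαprop : (⋃ i, Γ.cone (α i)) ≠ E) (hβprop : (⋃ i, Γ.cone (β i)) ≠ E) :
    ∃ f : Equiv.Perm ↥E, Γ.IsThompson E f ∧
      ∀ i, Γ.RealizesCanonSim E f (α i) (β i) := by
  obtain ⟨W, hirr, hreach, N, hN⟩ := hcore
  have hout := exists_out_edge hirr hreach
  set Lα := List.ofFn α with hLαdef
  set Lβ := List.ofFn β with hLβdef
  have hLαlen : Lα.length = k := List.length_ofFn (f := α)
  have hLβlen : Lβ.length = k := List.length_ofFn (f := β)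
  have hUα : Γ.unionL Lα = ⋃ i, Γ.cone (α i) := by
    ext x
    rw [mem_unionL, Set.mem_iUnion]
    constructor
    · rintro ⟨γ, hγ, hx⟩
      obtain ⟨i, rfl⟩ := (List.mem_ofFn (f := α) (a := γ)).mp hγ
      exact ⟨i, hx⟩
    · rintro ⟨i, hx⟩
      exact ⟨α i, (List.mem_ofFn (f := α) (a := α i)).mpr ⟨i, rfl⟩, hx⟩
  have hUβ : Γ.unionL Lβ = ⋃ i, Γ.cone (β i) := by
    ext x
    rw [mem_unionL, Set.mem_iUnion]
    constructor
    · rintro ⟨γ, hγ, hx⟩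
      obtain ⟨i, rfl⟩ := (List.mem_ofFn (f := β) (a := γ)).mp hγ
      exact ⟨i, hx⟩
    · rintro ⟨i, hx⟩
      exact ⟨β i, (List.mem_ofFn (f := β) (a := β i)).mpr ⟨i, rfl⟩, hx⟩
  have hpwα : Lα.Pairwise (fun γ δ => Disjoint (Γ.cone γ) (Γ.cone δ)) := by
    rw [hLαdef, List.pairwise_ofFn]
    intro i j hij
    exact hαdisj (Fin.ne_of_lt hij)
  have hpwβ : Lβ.Pairwise (fun γ δ => Disjoint (Γ.cone γ) (Γ.cone δ)) := by
    rw [hLβdef, List.pairwise_ofFn]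
    intro i j hij
    exact hβdisj (Fin.ne_of_lt hij)
  have hUαE : Γ.unionL Lα ⊆ E := by rw [hUα]; exact Set.iUnion_subset hαE
  have hUβE : Γ.unionL Lβ ⊆ E := by rw [hUβ]; exact Set.iUnion_subset hβE
  have hDαne : (E \ Γ.unionL Lα).Nonempty := by
    rw [hUα, Set.diff_nonempty]
    exact fun hsub => hαprop (Set.Subset.antisymm (Set.iUnion_subset hαE) hsub)
  have hDβne : (E \ Γ.unionL Lβ).Nonempty := by
    rw [hUβ, Set.diff_nonempty]
    exact fun hsub => hβprop (Set.Subset.antisymm (Set.iUnion_subset hβE) hsub)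
  have hDαclopen : IsClopen {z : ↥Γ.shift | (z : ℕ → Γ.E) ∈ E \ Γ.unionL Lα} := by
    have h1 : {z : ↥Γ.shift | (z : ℕ → Γ.E) ∈ E \ Γ.unionL Lα}
        = {z : ↥Γ.shift | (z : ℕ → Γ.E) ∈ E}
          \ {z : ↥Γ.shift | (z : ℕ → Γ.E) ∈ Γ.unionL Lα} := rfl
    rw [h1]
    exact IsClopen.diff hEclopen (unionL_clopen Lα)
  have hDβclopen : IsClopen {z : ↥Γ.shift | (z : ℕ → Γ.E) ∈ E \ Γ.unionL Lβ} := by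
    have h1 : {z : ↥Γ.shift | (z : ℕ → Γ.E) ∈ E \ Γ.unionL Lβ}
        = {z : ↥Γ.shift | (z : ℕ → Γ.E) ∈ E}
          \ {z : ↥Γ.shift | (z : ℕ → Γ.E) ∈ Γ.unionL Lβ} := rfl
    rw [h1]
    exact IsClopen.diff hEclopen (unionL_clopen Lβ)
  obtain ⟨Lγ, hLγ⟩ := clopen_partition (fun x hx => hEsub hx.1) hDαclopen hout
  obtain ⟨Lδ, hLδ⟩ := clopen_partition (fun x hx => hEsub hx.1) hDβclopen hout
  have hP1 : Γ.IsConePartition (Lα ++ Lγ) E := partition_append_compl hpwα hUαE hLγ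
  have hP2 : Γ.IsConePartition (Lβ ++ Lδ) E := partition_append_compl hpwβ hUβE hLδ
  have hTMhead : Γ.TM Lα = Γ.TM Lβ := by
    show ((Lα.map Γ.pathEnd : List Γ.V) : Multiset Γ.V) = ↑(Lβ.map Γ.pathEnd)
    rw [hLαdef, hLβdef, List.map_ofFn, List.map_ofFn]
    have : Γ.pathEnd ∘ α = Γ.pathEnd ∘ β := funext hend
    rw [this]
  have hJ : Γ.mJoin (Γ.TM Lγ + Γ.TM Lα) (Γ.TM Lδ + Γ.TM Lα) := by
    have h0 := partitions_join hout hP1 hP2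
    rw [TM_append, TM_append] at h0
    rw [add_comm (Γ.TM Lα), add_comm (Γ.TM Lβ)] at h0
    rwa [← hTMhead] at h0
  have hcan := mcancel hirr hout hN (TM_ne_zero hLγ hDαne) (TM_ne_zero hLδ hDβne) hJ
  obtain ⟨Z, hZ₁, hZ₂⟩ := hcan
  obtain ⟨Lγ', hLγ', hTMγ'⟩ := rt_lift hLγ hZ₁
  obtain ⟨Lδ', hLδ', hTMδ'⟩ := rt_lift hLδ hZ₂
  obtain ⟨Lδ'', hperm, hmapeq⟩ := match_lists Lγ' Lδ' (hTMγ'.trans hTMδ'.symm)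
  have hLδ''p : Γ.IsConePartition Lδ'' (E \ Γ.unionL Lβ) := partition_perm hperm.symm hLδ'
  have hP1' : Γ.IsConePartition (Lα ++ Lγ') E := partition_append_compl hpwα hUαE hLγ'
  have hP2' : Γ.IsConePartition (Lβ ++ Lδ'') E := partition_append_compl hpwβ hUβE hLδ''p
  have hlenγδ : Lγ'.length = Lδ''.length := by
    have := congrArg List.length hmapeq
    simpa using this
  have hlen : (Lα ++ Lγ').length = (Lβ ++ Lδ'').length := by
    simp [hLαlen, hLβlen, hlenγδ]
  have hfstLP : ((Lα ++ Lγ').zip (Lβ ++ Lδ'')).map Prod.fst = Lα ++ Lγ' :=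
    List.map_fst_zip (le_of_eq hlen)
  have hsndLP : ((Lα ++ Lγ').zip (Lβ ++ Lδ'')).map Prod.snd = Lβ ++ Lδ'' :=
    List.map_snd_zip (le_of_eq hlen.symm)
  have hLPlen : ((Lα ++ Lγ').zip (Lβ ++ Lδ'')).length = (Lα ++ Lγ').length := by
    rw [List.length_zip, hlen, min_self]
  have hendLP : ∀ p ∈ (Lα ++ Lγ').zip (Lβ ++ Lδ''),
      Γ.pathEnd p.1 = Γ.pathEnd p.2 := by
    intro p hp
    obtain ⟨n, hn, hpe⟩ := List.mem_iff_getElem.mp hp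
    have hn1 : n < (Lα ++ Lγ').length := by rw [hLPlen] at hn; exact hn
    have hn2 : n < (Lβ ++ Lδ'').length := by rw [← hlen]; exact hn1
    rw [← hpe, List.getElem_zip]
    show Γ.pathEnd (Lα ++ Lγ')[n] = Γ.pathEnd (Lβ ++ Lδ'')[n]
    rcases lt_or_ge n k with hnk | hnk
    · rw [List.getElem_append_left (by omega : n < Lα.length),
        List.getElem_append_left (by omega : n < Lβ.length)]
      have h1 : Lα[n]'(by omega) = α ⟨n, hnk⟩ := by
        simp [hLαdef, List.getElem_ofFn]
      have h2 : Lβ[n]'(by omega) = β ⟨n, hnk⟩ := by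
        simp [hLβdef, List.getElem_ofFn]
      rw [h1, h2]
      exact hend ⟨n, hnk⟩
    · have hnα : Lα.length ≤ n := by omega
      have hnβ : Lβ.length ≤ n := by omega
      rw [List.getElem_append_right hnα, List.getElem_append_right hnβ]
      have hidx : n - Lα.length < Lγ'.length := by
        have := hn1
        rw [List.length_append] at this
        omega
      have hidx2 : n - Lβ.length = n - Lα.length := by omega
      have hcalc : Γ.pathEnd (Lγ'[n - Lα.length]'hidx)
          = Γ.pathEnd (Lδ''[n - Lα.length]'(by omega)) := by
        have e1 := List.getElem_of_eq hmapeq (by simpa using hidx :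
          n - Lα.length < (Lγ'.map Γ.pathEnd).length)
        rw [List.getElem_map, List.getElem_map] at e1
        exact e1
      have hcast : Lδ''[n - Lβ.length]'(by omega) = Lδ''[n - Lα.length]'(by omega) := by
        simp only [hidx2]
      rw [hcast]
      exact hcalc
  obtain ⟨f, hThom, hReal⟩ := build_thompson hout
    (by rw [hfstLP]; exact hP1') (by rw [hsndLP]; exact hP2') hendLP
  refine ⟨f, hThom, fun i => ?_⟩
  have hik : (i : ℕ) < ((Lα ++ Lγ').zip (Lβ ++ Lδ'')).length := by
    rw [hLPlen, List.length_append, hLαlen]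
    omega
  have hgetLP : ((Lα ++ Lγ').zip (Lβ ++ Lδ''))[(i : ℕ)]'hik = (α i, β i) := by
    rw [List.getElem_zip]
    have h1 : (Lα ++ Lγ')[(i : ℕ)]'(by rw [← hLPlen]; exact hik) = α i := by
      rw [List.getElem_append_left (by omega : (i : ℕ) < Lα.length)]
      simp [hLαdef, List.getElem_ofFn]
    have h2 : (Lβ ++ Lδ'')[(i : ℕ)]'(by rw [← hlen, ← hLPlen]; exact hik) = β i := by
      rw [List.getElem_append_left (by omega : (i : ℕ) < Lβ.length)]
      simp [hLβdef, List.getElem_ofFn]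
    exact Prod.ext h1 h2
  have hmem : (α i, β i) ∈ (Lα ++ Lγ').zip (Lβ ++ Lδ'') := by
    rw [← hgetLP]
    exact List.getElem_mem hik
  exact hReal (α i, β i) hmem

end FinDigraph
/-- **Mapping cones with `V_{Γ,E}`.**  Given two families of pairwise disjoint cones in
`E` with matching termini, neither of which covers `E`, some element of the Thompson
group `V_{Γ,E}` maps each `C_{α_i}` to `C_{β_i}` by the canonical similarity. -/
theorem mapping_cones_with_thompson (Γ : FinDigraph) (hcore : Γ.HasIrreducibleCore)
    (E : Set (ℕ → Γ.E)) (hEsub : E ⊆ Γ.shift) (hEne : E.Nonempty)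
    (hEclopen : Γ.ClopenIn E)
    (k : ℕ) (α β : Fin k → Γ.FinPath)
    (hαE : ∀ i, Γ.cone (α i) ⊆ E) (hβE : ∀ i, Γ.cone (β i) ⊆ E)
    (hαdisj : Pairwise fun i j => Disjoint (Γ.cone (α i)) (Γ.cone (α j)))
    (hβdisj : Pairwise fun i j => Disjoint (Γ.cone (β i)) (Γ.cone (β j)))
    (hend : ∀ i, Γ.pathEnd (α i) = Γ.pathEnd (β i))
    (hαprop : (⋃ i, Γ.cone (α i)) ≠ E) (hβprop : (⋃ i, Γ.cone (β i)) ≠ E) :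
    ∃ f : Equiv.Perm ↥E, Γ.IsThompson E f ∧
      ∀ i, Γ.RealizesCanonSim E f (α i) (β i) :=
  FinDigraph.mapping_cones_aux Γ hcore E hEsub hEne hEclopen k α β hαE hβE
    hαdisj hβdisj hend hαprop hβprop

end
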